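/- arXiv:2003.12590 — 5 statements merged into one kernel-verified Lean document; each statement's English description precedes it below -/
import Mathlib

section
/- Let G and H be finite simple graphs. Then hom(F,G) = hom(F,H) for every finite simple graph F if and only if G and H are isomorphic. -/
/-- The number of graph homomorphisms from `F` to `G`. -/
noncomputable def homCount {α β : Type*} (F : SimpleGraph α) (G : SimpleGraph β) : ℕ :=
  Nat.card (F →g G)

namespace LovaszAux

open Function

variable {V W α β : Type*}

/-- The set of functions that are graph homomorphisms. -/
def homSet (F : SimpleGraph V) (G : SimpleGraph α) : Set (V → α) :=
  {f | ∀ ⦃u v⦄, F.Adj u v → G.Adj (f u) (f v)}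

/-- The number of injective graph homomorphisms. -/
noncomputable def injCount (F : SimpleGraph V) (G : SimpleGraph α) : ℕ :=
  Nat.card {f : V → α // f ∈ homSet F G ∧ Function.Injective f}

lemma homCount_eq_card_homSet (F : SimpleGraph V) (G : SimpleGraph α) :
    homCount F G = Nat.card {f : V → α // f ∈ homSet F G} :=
  Nat.card_congr
    { toFun := fun h => ⟨h, fun _ _ huv => h.map_adj huv⟩
      invFun := fun f => ⟨f.1, fun huv => f.2 huv⟩
      left_inv := fun _ => rfl
      right_inv := fun _ => rfl }

/-- `injCount` is invariant under isomorphism in the first argument. -/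
lemma injCount_congr {F : SimpleGraph V} {F' : SimpleGraph W} (φ : F ≃g F')
    (G : SimpleGraph α) : injCount F G = injCount F' G := by
  apply Nat.card_congr
  refine
    { toFun := fun f => ⟨f.1 ∘ φ.symm, fun u v h => f.2.1 (φ.symm.map_rel_iff.mpr h),
        f.2.2.comp φ.symm.injective⟩
      invFun := fun g => ⟨g.1 ∘ φ, fun u v h => g.2.1 (φ.map_rel_iff.mpr h),
        g.2.2.comp φ.injective⟩
      left_inv := fun f => ?_
      right_inv := fun g => ?_ }
  · ext x; simp
  · ext x; simp

/-- Quotient of a graph by a setoid. -/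
def quotGraph (F : SimpleGraph V) (s : Setoid V) : SimpleGraph (Quotient s) where
  Adj a b := a ≠ b ∧ ∃ u v, Quotient.mk s u = a ∧ Quotient.mk s v = b ∧ F.Adj u v
  symm := by
    constructor
    rintro a b ⟨h, u, v, hu, hv, hadj⟩
    exact ⟨h.symm, v, u, hv, hu, hadj.symm⟩
  loopless := ⟨fun a h => h.1 rfl⟩

instance finiteSetoid [Finite V] : Finite (Setoid V) := by
  have : Function.Injective (fun s : Setoid V => s.r) := by
    intro a b h
    cases a; cases b
    cases h; rfl
  exact Finite.of_injective _ this

section Fiber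

variable (F : SimpleGraph V) (G : SimpleGraph α) (s : Setoid V)

/-- Homomorphisms whose kernel merges an edge do not exist. -/
lemma fiber_bad (hbad : ∃ u v, F.Adj u v ∧ s u v) :
    IsEmpty {f : {f : V → α // f ∈ homSet F G} // Setoid.ker f.1 = s} := by
  constructor
  rintro ⟨⟨f, hf⟩, hker⟩
  obtain ⟨u, v, hadj, hsuv⟩ := hbad
  rw [← hker] at hsuv
  have hfe : f u = f v := hsuv
  have := hf hadj
  rw [hfe] at this
  exact G.irrefl this

/-- Homomorphisms with kernel `s` correspond to injective homomorphisms from the quotient. -/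
noncomputable def fiberEquiv (hgood : ∀ ⦃u v⦄, F.Adj u v → ¬ s u v) :
    {f : {f : V → α // f ∈ homSet F G} // Setoid.ker f.1 = s} ≃
      {g : Quotient s → α // g ∈ homSet (quotGraph F s) G ∧ Function.Injective g} where
  toFun f :=
    ⟨Quotient.lift f.1.1 (fun a b h => by rw [← f.2] at h; exact h), by
      constructor
      · rintro a b ⟨hne, u, v, hu, hv, hadj⟩
        subst hu; subst hv
        exact f.1.2 hadj
      · intro a b
        induction a using Quotient.ind
        induction b using Quotient.ind
        intro h
        apply Quotient.sound
        rw [← f.2]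
        exact h⟩
  invFun g :=
    ⟨⟨g.1 ∘ Quotient.mk s, by
      intro u v hadj
      exact g.2.1 ⟨fun h => hgood hadj (Quotient.exact h), u, v, rfl, rfl, hadj⟩⟩, by
      apply Setoid.ext
      intro a b
      constructor
      · intro h
        have : g.1 (Quotient.mk s a) = g.1 (Quotient.mk s b) := h
        exact Quotient.exact (g.2.2 this)
      · intro h
        have : Quotient.mk s a = Quotient.mk s b := Quotient.sound h
        show g.1 _ = g.1 _
        rw [this]⟩
  left_inv f := by
    apply Subtype.ext
    apply Subtype.ext
    rfl
  right_inv g := by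
    apply Subtype.ext
    funext a
    induction a using Quotient.ind
    rfl

end Fiber


/-- Decomposition of the hom set over kernels. -/
lemma decomp {n : ℕ} (K : SimpleGraph α) [Fintype α] (F : SimpleGraph (Fin n))
    [Fintype (Setoid (Fin n))] :
    Nat.card {f : Fin n → α // f ∈ homSet F K} =
      ∑ s : Setoid (Fin n),
        Nat.card {f : {f : Fin n → α // f ∈ homSet F K} // Setoid.ker f.1 = s} := by
  classical
  rw [← Nat.card_congr
    (Equiv.sigmaFiberEquiv (fun f : {f : Fin n → α // f ∈ homSet F K} => Setoid.ker f.1))]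
  letI : ∀ s : Setoid (Fin n),
      Fintype {f : {f : Fin n → α // f ∈ homSet F K} // Setoid.ker f.1 = s} :=
    fun s => Fintype.ofFinite _
  rw [Nat.card_eq_fintype_card, Fintype.card_sigma]
  simp [Nat.card_eq_fintype_card]

/-- The fiber over the bottom setoid is the set of injective homomorphisms. -/
lemma card_fiber_bot {n : ℕ} (K : SimpleGraph α) (F : SimpleGraph (Fin n)) :
    Nat.card {f : {f : Fin n → α // f ∈ homSet F K} // Setoid.ker f.1 = ⊥} =
      injCount F K :=
  Nat.card_congr
    { toFun := fun f => ⟨f.1.1, f.1.2, (Setoid.injective_iff_ker_bot _).mpr f.2⟩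
      invFun := fun g => ⟨⟨g.1, g.2.1⟩, (Setoid.injective_iff_ker_bot _).mp g.2.2⟩
      left_inv := fun _ => rfl
      right_inv := fun _ => rfl }

/-- Key step: equal hom counts imply equal injective hom counts. -/
lemma key [Fintype α] [Fintype β] (G : SimpleGraph α) (H : SimpleGraph β)
    (hyp : ∀ (n : ℕ) (F : SimpleGraph (Fin n)), homCount F G = homCount F H) :
    ∀ (n : ℕ) (F : SimpleGraph (Fin n)), injCount F G = injCount F H := by
  intro n
  induction n using Nat.strong_induction_on with
  | _ n IH =>
    intro F
    classical
    letI : Fintype (Setoid (Fin n)) := Fintype.ofFinite _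
    -- termwise equality of nontrivial fibers
    have hterm : ∀ s : Setoid (Fin n), s ≠ ⊥ →
        Nat.card {f : {f : Fin n → α // f ∈ homSet F G} // Setoid.ker f.1 = s} =
          Nat.card {f : {f : Fin n → β // f ∈ homSet F H} // Setoid.ker f.1 = s} := by
      intro s hs
      by_cases hbad : ∃ u v, F.Adj u v ∧ s u v
      · haveI := fiber_bad F G s hbad
        haveI := fiber_bad F H s hbad
        rw [Nat.card_of_isEmpty, Nat.card_of_isEmpty]
      · push_neg at hbad
        have hgood : ∀ ⦃u v⦄, F.Adj u v → ¬ s u v := fun u v h => hbad u v h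
        have h1 := Nat.card_congr (fiberEquiv F G s hgood)
        have h2 := Nat.card_congr (fiberEquiv F H s hgood)
        rw [h1, h2]
        show injCount (quotGraph F s) G = injCount (quotGraph F s) H
        -- transport to `Fin m` with `m < n`
        obtain ⟨u, v, hne, hsuv⟩ : ∃ u v, u ≠ v ∧ s u v := by
          by_contra hc
          push_neg at hc
          apply hs
          apply Setoid.ext
          intro a b
          simp only [Setoid.bot_def]
          constructor
          · intro h
            by_contra hne
            exact hc a b hne h
          · rintro rfl
            exact s.refl a
        have hm : Fintype.card (Quotient s) < n := by
          have := Fintype.card_lt_of_surjective_not_injective (Quotient.mk s)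
            Quotient.mk_surjective (fun hinj => hne (hinj (Quotient.sound hsuv)))
          simpa using this
        have iso := SimpleGraph.Iso.comap (Fintype.equivFin (Quotient s)).symm (quotGraph F s)
        rw [injCount_congr iso.symm G, injCount_congr iso.symm H]
        exact IH _ hm _
    have h0 : Nat.card {f : Fin n → α // f ∈ homSet F G} =
        Nat.card {f : Fin n → β // f ∈ homSet F H} := by
      rw [← homCount_eq_card_homSet, ← homCount_eq_card_homSet]
      exact hyp n F
    rw [decomp G F, decomp H F] at h0
    rw [← Finset.add_sum_erase _ _ (Finset.mem_univ (⊥ : Setoid (Fin n))),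
      ← Finset.add_sum_erase _ _ (Finset.mem_univ (⊥ : Setoid (Fin n)))] at h0
    have hsum : ∑ s ∈ Finset.univ.erase (⊥ : Setoid (Fin n)),
        Nat.card {f : {f : Fin n → α // f ∈ homSet F G} // Setoid.ker f.1 = s} =
          ∑ s ∈ Finset.univ.erase (⊥ : Setoid (Fin n)),
            Nat.card {f : {f : Fin n → β // f ∈ homSet F H} // Setoid.ker f.1 = s} :=
      Finset.sum_congr rfl fun s hsm => hterm s (Finset.mem_erase.mp hsm).1
    rw [hsum] at h0
    have := Nat.add_right_cancel h0
    rwa [card_fiber_bot, card_fiber_bot] at this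

/-- Equal injective hom counts give an injective homomorphism. -/
lemma exists_hom [Fintype α] [Fintype β] (G : SimpleGraph α) (H : SimpleGraph β)
    (key' : ∀ (n : ℕ) (F : SimpleGraph (Fin n)), injCount F G = injCount F H) :
    ∃ φ : α → β, Function.Injective φ ∧ ∀ ⦃u v⦄, G.Adj u v → H.Adj (φ u) (φ v) := by
  classical
  set e := Fintype.equivFin α with he
  set F₀ : SimpleGraph (Fin (Fintype.card α)) := G.comap ⇑e.symm with hF₀
  have h1 : 0 < injCount F₀ G := by
    have : Nonempty {f : Fin (Fintype.card α) → α // f ∈ homSet F₀ G ∧ Function.Injective f} :=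
      ⟨⟨⇑e.symm, fun u v h => h, e.symm.injective⟩⟩
    exact Nat.card_pos
  rw [key' _ F₀] at h1
  obtain ⟨⟨f, hfhom, hfinj⟩⟩ := (Nat.card_pos_iff.mp h1).1
  refine ⟨f ∘ e, hfinj.comp e.injective, fun u v h => hfhom ?_⟩
  show G.Adj (e.symm (e u)) (e.symm (e v))
  simpa using h

end LovaszAux
/-- **Lovász (1967).** Two finite simple graphs `G` and `H` are isomorphic if and only if
`hom(F,G) = hom(F,H)` for every finite simple graph `F`. -/
theorem hom_count_eq_iff_iso {α β : Type*} [Fintype α] [Fintype β]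
    (G : SimpleGraph α) (H : SimpleGraph β) :
    (∀ (n : ℕ) (F : SimpleGraph (Fin n)), homCount F G = homCount F H) ↔
      Nonempty (G ≃g H) := by
  open LovaszAux in
  constructor
  · intro hyp
    have k1 := LovaszAux.key G H hyp
    have k2 := LovaszAux.key H G (fun n F => (hyp n F).symm)
    obtain ⟨φ, hφinj, hφhom⟩ := LovaszAux.exists_hom G H k1
    obtain ⟨ψ, hψinj, hψhom⟩ := LovaszAux.exists_hom H G k2
    have hcard : Fintype.card α = Fintype.card β :=
      le_antisymm (Fintype.card_le_of_injective φ hφinj)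
        (Fintype.card_le_of_injective ψ hψinj)
    have hφbij : Function.Bijective φ :=
      (Fintype.bijective_iff_injective_and_card φ).mpr ⟨hφinj, hcard⟩
    set σ := ψ ∘ φ with hσ
    have hσhom : ∀ ⦃u v⦄, G.Adj u v → G.Adj (σ u) (σ v) := fun u v h => hψhom (hφhom h)
    have hσiter : ∀ j, ∀ ⦃u v⦄, G.Adj u v → G.Adj (σ^[j] u) (σ^[j] v) := by
      intro j
      induction j with
      | zero => intro u v h; simpa using h
      | succ j ih =>
        intro u v h
        rw [Function.iterate_succ']
        exact hσhom (ih h)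
    have hσbij : Function.Bijective σ :=
      Finite.injective_iff_bijective.mp (hψinj.comp hφinj)
    set p : Equiv.Perm α := Equiv.ofBijective σ hσbij with hp
    set k := orderOf p with hkdef
    have hkpos : 0 < k := orderOf_pos p
    have hk : σ^[k] = id := by
      have h1 : p ^ k = 1 := pow_orderOf_eq_one p
      have h2 : ⇑(p ^ k) = σ^[k] := by
        rw [Equiv.Perm.coe_pow]
        rfl
      rw [h1] at h2
      exact h2.symm
    have hleft : ∀ x, σ^[k - 1] (ψ (φ x)) = x := by
      intro x
      have h3 : σ^[k - 1] (σ x) = σ^[k] x := by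
        conv_rhs => rw [show k = (k - 1) + 1 from (Nat.succ_pred_eq_of_pos hkpos).symm]
        rw [Function.iterate_succ]
        rfl
      have : σ^[k - 1] (ψ (φ x)) = σ^[k] x := h3
      rw [hk] at this
      exact this
    have hχhom : ∀ ⦃u v⦄, H.Adj u v → G.Adj (σ^[k - 1] (ψ u)) (σ^[k - 1] (ψ v)) :=
      fun u v h => hσiter (k - 1) (hψhom h)
    refine ⟨⟨Equiv.ofBijective φ hφbij, fun {a b} => ⟨fun h => ?_, fun h => hφhom h⟩⟩⟩
    have := hχhom h
    rw [show ((Equiv.ofBijective φ hφbij) a) = φ a from rfl,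
      show ((Equiv.ofBijective φ hφbij) b) = φ b from rfl] at this
    rwa [hleft, hleft] at this
  · rintro ⟨e⟩ n F
    rw [LovaszAux.homCount_eq_card_homSet, LovaszAux.homCount_eq_card_homSet]
    apply Nat.card_congr
    refine
      { toFun := fun f => ⟨⇑e ∘ f.1, fun u v h => e.map_rel_iff.mpr (f.2 h)⟩
        invFun := fun g => ⟨⇑e.symm ∘ g.1, fun u v h => e.symm.map_rel_iff.mpr (g.2 h)⟩
        left_inv := fun f => ?_
        right_inv := fun g => ?_ }
    · ext x; simp
    · ext x; simp
end

section
/- Let G and H be finite simple graphs with adjacency matrices A ∈ ℚ^{V×V} and B ∈ ℚ^{W×W}. Then hom(P_n, G) = hom(P_n, H) for every path P_n on n ≥ 1 vertices if and only if there exists a rational matrix X ∈ ℚ^{V×W} satisfying AX = XB and such that every row sum and every column sum of X equals 1 (no nonnegativity required). -/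
set_option linter.unusedSectionVars false
set_option linter.unusedTactic false
set_option maxHeartbeats 1000000

open SimpleGraph Matrix Finset

namespace DGRaux


variable {α : Type*} (G : SimpleGraph α)

/-- Build a walk from a function with the chain property. -/
def walkOfFn : ∀ (n : ℕ) (f : ℕ → α), (∀ i < n, G.Adj (f i) (f (i+1))) → G.Walk (f 0) (f n)
  | 0, _, _ => SimpleGraph.Walk.nil
  | n+1, f, h =>
      SimpleGraph.Walk.cons (h 0 (Nat.succ_pos n))
        (walkOfFn n (fun i => f (i+1)) (fun i hi => h (i+1) (by omega)))

lemma length_walkOfFn : ∀ (n : ℕ) (f : ℕ → α) (h : ∀ i < n, G.Adj (f i) (f (i+1))),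
    (walkOfFn G n f h).length = n
  | 0, _, _ => rfl
  | n+1, f, h => by
      simp [walkOfFn, length_walkOfFn n]

lemma getVert_walkOfFn : ∀ (n : ℕ) (f : ℕ → α) (h : ∀ i < n, G.Adj (f i) (f (i+1))) (i : ℕ),
    (walkOfFn G n f h).getVert i = f (min i n)
  | 0, f, h, i => by rw [Nat.min_zero]; rfl
  | n+1, f, h, 0 => by simp [walkOfFn]
  | n+1, f, h, (i+1) => by
      have := getVert_walkOfFn n (fun j => f (j+1)) (fun j hj => h (j+1) (by omega)) i
      simp only [walkOfFn, SimpleGraph.Walk.getVert_cons_succ, this]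
      congr 1
      omega

lemma walk_eq_of_getVert {u v : α} (p : G.Walk u v) :
    ∀ (q : G.Walk u v), p.length = q.length → (∀ i, p.getVert i = q.getVert i) → p = q := by
  induction p with
  | nil =>
      intro q hl _
      cases q with
      | nil => rfl
      | cons h q => simp at hl
  | @cons u w v hadj p ih =>
      intro q hl hv
      cases q with
      | nil => simp at hl
      | @cons _ w₂ _ hadj₂ q =>
          have hw : w = w₂ := by
            have h1 := hv 1
            simpa [SimpleGraph.Walk.getVert_cons_succ] using h1
          subst hw
          have : p = q := by
            apply ih
            · simpa using hl
            · intro i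
              simpa [SimpleGraph.Walk.getVert_cons_succ] using hv (i+1)
          rw [this]



variable [Fintype α] [DecidableEq α] [DecidableRel G.Adj]


def toHomPath (n : ℕ) (w : Σ u : α, Σ v : α, {p : G.Walk u v // p.length = n}) :
    SimpleGraph.pathGraph (n+1) →g G where
  toFun i := w.2.2.1.getVert i.val
  map_rel' := by
    rintro i j hij
    rw [SimpleGraph.pathGraph_adj] at hij
    obtain ⟨u, v, p, hp⟩ := w
    rcases hij with h | h
    · have : (i : ℕ) < p.length := by omega
      simpa [← h] using p.adj_getVert_succ this
    · have : (j : ℕ) < p.length := by omega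
      exact (by simpa [← h] using p.adj_getVert_succ this : G.Adj (p.getVert j) (p.getVert i)).symm

lemma toHomPath_bijective (n : ℕ) : Function.Bijective (toHomPath G n) := by
  constructor
  · rintro ⟨u, v, p, hp⟩ ⟨u', v', q, hq⟩ h
    have hfun : ∀ i : Fin (n+1), p.getVert i.val = q.getVert i.val := by
      intro i
      exact congrFun (congrArg DFunLike.coe h) i
    have hu : u = u' := by
      have := hfun ⟨0, by omega⟩
      simpa using this
    subst hu
    have hv : v = v' := by
      have := hfun ⟨n, by omega⟩
      simp only at this
      rw [show p.getVert n = v by rw [← hp]; exact p.getVert_length,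
        show q.getVert n = v' by rw [← hq]; exact q.getVert_length] at this
      exact this
    subst hv
    have hpq : p = q := by
      apply walk_eq_of_getVert G p q (hp.trans hq.symm)
      intro i
      rcases le_or_gt i n with hi | hi
      · exact hfun ⟨i, by omega⟩
      · rw [p.getVert_of_length_le (by omega), q.getVert_of_length_le (by omega)]
    subst hpq
    rfl
  · intro f
    set F : ℕ → α := fun i => f ⟨min i n, by omega⟩ with hF
    have hchain : ∀ i < n, G.Adj (F i) (F (i+1)) := by
      intro i hi
      apply f.map_rel'
      rw [SimpleGraph.pathGraph_adj]
      left
      simp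
      omega
    refine ⟨⟨F 0, F n, walkOfFn G n F hchain, length_walkOfFn G n F hchain⟩, ?_⟩
    ext i
    show (walkOfFn G n F hchain).getVert i.val = f i
    rw [getVert_walkOfFn]
    have : min (min i.val n) n = min i.val n := by omega
    rw [hF]
    simp only [this]
    congr 1
    apply Fin.ext
    simp
    omega

lemma homCount_pathGraph (n : ℕ) :
    (homCount (SimpleGraph.pathGraph (n+1)) G : ℚ) =
      ∑ u : α, ∑ v : α, (G.adjMatrix ℚ ^ n) u v := by
  have h1 : homCount (SimpleGraph.pathGraph (n+1)) G
      = Nat.card (Σ u : α, Σ v : α, {p : G.Walk u v // p.length = n}) := by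
    rw [homCount, Nat.card_eq_of_bijective _ (toHomPath_bijective G n)]
  rw [h1, Nat.card_eq_fintype_card]
  rw [Fintype.card_sigma]
  push_cast
  refine Finset.sum_congr rfl fun u _ => ?_
  rw [Fintype.card_sigma]
  push_cast
  refine Finset.sum_congr rfl fun v _ => ?_
  rw [SimpleGraph.adjMatrix_pow_apply_eq_card_walk]
  norm_cast



lemma homCount_eq_dot {α : Type*} [Fintype α] [DecidableEq α] (G : SimpleGraph α)
    [DecidableRel G.Adj] (k : ℕ) :
    (homCount (SimpleGraph.pathGraph (k+1)) G : ℚ)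
      = (1 : α → ℚ) ⬝ᵥ ((G.adjMatrix ℚ) ^ k *ᵥ 1) := by
  rw [homCount_pathGraph]
  simp [one_dotProduct, Matrix.mulVec, dotProduct]


variable {γ : Type*} [Fintype γ] [DecidableEq γ]

lemma dot_pow_mulVec (M : Matrix γ γ ℚ) (hM : Mᵀ = M) (i j : ℕ) :
    ((M^i) *ᵥ 1) ⬝ᵥ ((M^j) *ᵥ 1) = (1 : γ → ℚ) ⬝ᵥ ((M^(i+j)) *ᵥ 1) := by
  have hMi : (M^i)ᵀ = M^i := by rw [Matrix.transpose_pow, hM]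
  rw [pow_add, ← Matrix.mulVec_mulVec, Matrix.dotProduct_mulVec (1 : γ → ℚ) (M^i),
    ← Matrix.mulVec_transpose, hMi]

/-- dot product as a bilinear form -/
def dotForm (γ : Type*) [Fintype γ] : LinearMap.BilinForm ℚ (γ → ℚ) :=
  LinearMap.mk₂ ℚ (fun x y => x ⬝ᵥ y)
    (fun x y z => add_dotProduct x y z)
    (fun c x y => smul_dotProduct c x y)
    (fun x y z => dotProduct_add x y z)
    (fun c x y => dotProduct_smul c x y)

@[simp] lemma dotForm_apply (x y : γ → ℚ) : dotForm γ x y = x ⬝ᵥ y := rfl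

lemma dotForm_refl : (dotForm γ).IsRefl := by
  intro x y h
  simpa [dotProduct_comm] using h

theorem exists_intertwiner {α β : Type*} [Fintype α] [Fintype β] [DecidableEq α] [DecidableEq β]
    (A : Matrix α α ℚ) (B : Matrix β β ℚ) (hA : Aᵀ = A) (hB : Bᵀ = B)
    (h : ∀ k : ℕ, (1 : α → ℚ) ⬝ᵥ ((A ^ k) *ᵥ 1) = (1 : β → ℚ) ⬝ᵥ ((B ^ k) *ᵥ 1)) :
    ∃ X : Matrix α β ℚ, A * X = X * B ∧ X *ᵥ (1 : β → ℚ) = 1 ∧ (1 : α → ℚ) ᵥ* X = 1 := by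
  classical
  set u : ℕ → (α → ℚ) := fun k => (A ^ k) *ᵥ 1 with hu
  set v : ℕ → (β → ℚ) := fun k => (B ^ k) *ᵥ 1 with hv
  have gram : ∀ i j, u i ⬝ᵥ u j = v i ⬝ᵥ v j := by
    intro i j
    rw [hu, hv]
    simp only
    rw [dot_pow_mulVec A hA, dot_pow_mulVec B hB, h]
  set S : (ℕ →₀ ℚ) →ₗ[ℚ] (α → ℚ) := Finsupp.linearCombination ℚ u with hS
  set T : (ℕ →₀ ℚ) →ₗ[ℚ] (β → ℚ) := Finsupp.linearCombination ℚ v with hT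
  have hST : ∀ f g, S f ⬝ᵥ S g = T f ⬝ᵥ T g := by
    intro f
    induction f using Finsupp.induction_linear with
    | zero => intro g; simp
    | add f₁ f₂ ih₁ ih₂ =>
        intro g
        simp only [map_add, add_dotProduct, ih₁ g, ih₂ g]
    | single a b =>
        intro g
        induction g using Finsupp.induction_linear with
        | zero => simp
        | add g₁ g₂ ih₁ ih₂ => simp only [map_add, dotProduct_add, ih₁, ih₂]
        | single c d =>
            simp only [hS, hT, Finsupp.linearCombination_single, smul_dotProduct,
              dotProduct_smul, gram a c]
  have hker : LinearMap.ker T ≤ LinearMap.ker S := by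
    intro f hf
    rw [LinearMap.mem_ker] at hf ⊢
    have h2 := hST f f
    rw [hf] at h2
    simp only [zero_dotProduct] at h2
    exact dotProduct_self_eq_zero.mp h2
  set W : Submodule ℚ (β → ℚ) := LinearMap.range T with hW
  set ψ : W →ₗ[ℚ] (α → ℚ) :=
    ((LinearMap.ker T).liftQ S hker) ∘ₗ (T.quotKerEquivRange.symm : W →ₗ[ℚ] _) with hψdef
  have hψ : ∀ f : ℕ →₀ ℚ, ψ ⟨T f, LinearMap.mem_range_self T f⟩ = S f := by
    intro f
    have h1 : T.quotKerEquivRange (Submodule.Quotient.mk f)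
        = ⟨T f, LinearMap.mem_range_self T f⟩ :=
      Subtype.ext (T.quotKerEquivRange_apply_mk f)
    rw [hψdef]
    simp only [LinearMap.coe_comp, Function.comp_apply, LinearEquiv.coe_coe, ← h1,
      LinearEquiv.symm_apply_apply]
    exact Submodule.liftQ_apply _ S f
  have hnd : ((dotForm β).restrict W).Nondegenerate := by
    refine ⟨?_, ?_⟩ <;> rintro ⟨x, hx⟩ hall <;> have h0 := hall ⟨x, hx⟩ <;>
    simp only [LinearMap.flip_apply, LinearMap.BilinForm.restrict_apply, dotForm_apply] at h0 <;>
    exact Subtype.ext (dotProduct_self_eq_zero.mp h0)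
  have hcompl : IsCompl W ((dotForm β).orthogonal W) :=
    LinearMap.BilinForm.isCompl_orthogonal_of_restrict_nondegenerate dotForm_refl hnd
  set P : (β → ℚ) →ₗ[ℚ] W := W.linearProjOfIsCompl _ hcompl with hP
  have hPleft : ∀ (y : W), P y = y := fun y => Submodule.linearProjOfIsCompl_apply_left hcompl y
  have hPright : ∀ x ∈ (dotForm β).orthogonal W, P x = 0 := fun x hx =>
    Submodule.projectionOnto_apply_of_mem_right hcompl hx
  have hsub : ∀ x : β → ℚ, x - (P x : β → ℚ) ∈ (dotForm β).orthogonal W := by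
    intro x
    have h0 : P (x - (P x : β → ℚ)) = 0 := by
      rw [map_sub, hPleft (P x), sub_self]
    rw [← Submodule.linearProjOfIsCompl_ker hcompl]
    exact LinearMap.mem_ker.mpr h0
  have horthdot : ∀ q ∈ (dotForm β).orthogonal W, ∀ f, (T f) ⬝ᵥ q = 0 := by
    intro q hq f
    exact hq (T f) (LinearMap.mem_range_self T f)
  -- the shift operator
  set sh : (ℕ →₀ ℚ) →ₗ[ℚ] (ℕ →₀ ℚ) := Finsupp.lmapDomain ℚ ℚ (· + 1) with hsh
  have hBT : ∀ f, B *ᵥ (T f) = T (sh f) := by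
    have : (Matrix.mulVecLin B) ∘ₗ T = T ∘ₗ sh := by
      apply Finsupp.lhom_ext
      intro a b
      simp only [LinearMap.coe_comp, Function.comp_apply, hsh, Finsupp.lmapDomain_apply,
        Finsupp.mapDomain_single, hT, Finsupp.linearCombination_single, _root_.map_smul,
        Matrix.mulVecLin_apply, hv]
      rw [Matrix.mulVec_mulVec, ← pow_succ']
    intro f
    simpa only [LinearMap.coe_comp, Function.comp_apply, Matrix.mulVecLin_apply] using
      LinearMap.congr_fun this f
  have hAS : ∀ f, A *ᵥ (S f) = S (sh f) := by
    have : (Matrix.mulVecLin A) ∘ₗ S = S ∘ₗ sh := by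
      apply Finsupp.lhom_ext
      intro a b
      simp only [LinearMap.coe_comp, Function.comp_apply, hsh, Finsupp.lmapDomain_apply,
        Finsupp.mapDomain_single, hS, Finsupp.linearCombination_single, _root_.map_smul,
        Matrix.mulVecLin_apply, hu]
      rw [Matrix.mulVec_mulVec, ← pow_succ']
    intro f
    simpa only [LinearMap.coe_comp, Function.comp_apply, Matrix.mulVecLin_apply] using
      LinearMap.congr_fun this f
  set Xmap : (β → ℚ) →ₗ[ℚ] (α → ℚ) := ψ ∘ₗ P with hXmap
  set X : Matrix α β ℚ := LinearMap.toMatrix' Xmap with hX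
  have hXmul : ∀ x, X *ᵥ x = Xmap x := by
    intro x
    rw [hX, ← Matrix.toLin'_apply, Matrix.toLin'_toMatrix']
  -- key decomposition computation
  have hXval : ∀ (x : β → ℚ) (f : ℕ →₀ ℚ), T f = (P x : β → ℚ) → Xmap x = S f := by
    intro x f hf
    have : P x = ⟨T f, LinearMap.mem_range_self T f⟩ := Subtype.ext hf.symm
    rw [hXmap]
    simp only [LinearMap.coe_comp, Function.comp_apply, this, hψ]
  -- intertwining
  have hinter : ∀ x, A *ᵥ (Xmap x) = Xmap (B *ᵥ x) := by
    intro x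
    obtain ⟨f, hf⟩ := (P x).2
    have hxdec : B *ᵥ x = B *ᵥ (P x : β → ℚ) + B *ᵥ (x - (P x : β → ℚ)) := by
      rw [← Matrix.mulVec_add, add_sub_cancel]
    have hq : B *ᵥ (x - (P x : β → ℚ)) ∈ (dotForm β).orthogonal W := by
      intro n hn
      obtain ⟨g, hg⟩ := hn
      show (dotForm β) n _ = 0
      rw [dotForm_apply, ← hg, Matrix.dotProduct_mulVec, ← Matrix.mulVec_transpose, hB, hBT]
      exact horthdot _ (hsub x) (sh g)
    have hPBx : (P (B *ᵥ x) : β → ℚ) = T (sh f) := by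
      rw [hxdec, map_add]
      have h1 : P (B *ᵥ (P x : β → ℚ)) = ⟨T (sh f), LinearMap.mem_range_self T (sh f)⟩ := by
        have heq : B *ᵥ (P x : β → ℚ) = T (sh f) := by rw [← hf, hBT]
        rw [heq]
        exact hPleft ⟨T (sh f), LinearMap.mem_range_self T (sh f)⟩
      rw [h1, hPright _ hq, add_zero]
    have hXBx : Xmap (B *ᵥ x) = S (sh f) := hXval _ _ hPBx.symm
    rw [hXBx, hXval x f hf, hAS]
  -- row sums
  have hone : T (Finsupp.single 0 1) = (1 : β → ℚ) := by
    rw [hT]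
    simp only [Finsupp.linearCombination_single, one_smul, hv, pow_zero, Matrix.one_mulVec]
  have honeα : S (Finsupp.single 0 1) = (1 : α → ℚ) := by
    rw [hS]
    simp only [Finsupp.linearCombination_single, one_smul, hu, pow_zero, Matrix.one_mulVec]
  have hrow : Xmap (1 : β → ℚ) = 1 := by
    have hmem : (1 : β → ℚ) ∈ W := ⟨Finsupp.single 0 1, hone⟩
    have h1 : (P (1 : β → ℚ) : β → ℚ) = T (Finsupp.single 0 1) := by
      have h2 := hPleft ⟨(1 : β → ℚ), hmem⟩
      rw [show P (1 : β → ℚ) = P ((⟨(1:β→ℚ), hmem⟩ : W) : β → ℚ) from rfl, h2]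
      exact hone.symm
    rw [hXval 1 (Finsupp.single 0 1) h1.symm, honeα]
  -- column sums
  have hcol : ∀ x, (1 : α → ℚ) ⬝ᵥ Xmap x = (1 : β → ℚ) ⬝ᵥ x := by
    intro x
    obtain ⟨f, hf⟩ := (P x).2
    have hxd : x = (P x : β → ℚ) + (x - (P x : β → ℚ)) := (add_sub_cancel _ _).symm
    have h2 : Xmap x = S f := hXval x f hf
    have hz : (1 : β → ℚ) ⬝ᵥ (x - (P x : β → ℚ)) = 0 := by
      rw [← hone]
      exact horthdot _ (hsub x) _
    have h3 : (1 : β → ℚ) ⬝ᵥ x = (1 : β → ℚ) ⬝ᵥ (P x : β → ℚ) := by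
      conv_lhs => rw [hxd]
      rw [dotProduct_add, hz, add_zero]
    rw [h2, h3, ← hf, ← honeα, hST, hone]
  refine ⟨X, ?_, ?_, ?_⟩
  · apply Matrix.toLin'.injective
    apply LinearMap.ext
    intro x
    simp only [Matrix.toLin'_mul, LinearMap.coe_comp, Function.comp_apply, Matrix.toLin'_apply]
    rw [hXmul, hXmul]
    exact hinter x
  · rw [hXmul, hrow]
  · funext w
    have h1 := hcol (Pi.single w 1)
    rw [← hXmul] at h1
    simp only [Matrix.mulVec, dotProduct, Pi.one_apply, one_mul, Pi.single_apply,
      mul_ite, mul_one, mul_zero, Finset.sum_ite_eq', Finset.mem_univ, if_true] at h1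
    simp only [Matrix.vecMul, dotProduct, Pi.one_apply, one_mul, Pi.one_apply]
    exact h1

end DGRaux

/-- **Dell–Grohe–Rattan.** Two finite simple graphs `G`, `H` with adjacency matrices `A`, `B`
over `ℚ` satisfy `hom(P_n, G) = hom(P_n, H)` for every path `P_n` (`n ≥ 1` vertices) if and
only if there is a rational matrix `X` with `A X = X B` all of whose row sums and column sums
equal `1` (no nonnegativity required). -/
theorem hom_count_paths_eq_iff {α β : Type*}
    [Fintype α] [Fintype β] [DecidableEq α] [DecidableEq β]
    (G : SimpleGraph α) (H : SimpleGraph β)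
    [DecidableRel G.Adj] [DecidableRel H.Adj] :
    (∀ n : ℕ, 1 ≤ n →
        homCount (SimpleGraph.pathGraph n) G = homCount (SimpleGraph.pathGraph n) H) ↔
      ∃ X : Matrix α β ℚ,
        G.adjMatrix ℚ * X = X * H.adjMatrix ℚ ∧
        (∀ v : α, ∑ w : β, X v w = 1) ∧
        (∀ w : β, ∑ v : α, X v w = 1) := by
  constructor
  · intro h
    obtain ⟨X, hAX, hX1, hX2⟩ := DGRaux.exists_intertwiner (G.adjMatrix ℚ) (H.adjMatrix ℚ)
      (SimpleGraph.transpose_adjMatrix G) (SimpleGraph.transpose_adjMatrix H)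
      (fun k => by
        rw [← DGRaux.homCount_eq_dot G k, ← DGRaux.homCount_eq_dot H k]
        exact_mod_cast congrArg (Nat.cast : ℕ → ℚ) (h (k+1) (by omega)))
    refine ⟨X, hAX, ?_, ?_⟩
    · intro v
      have := congrFun hX1 v
      simpa [Matrix.mulVec, dotProduct] using this
    · intro w
      have := congrFun hX2 w
      simpa [Matrix.vecMul, dotProduct] using this
  · rintro ⟨X, hAX, hrow, hcol⟩ n hn
    obtain ⟨k, rfl⟩ : ∃ k, n = k + 1 := ⟨n - 1, by omega⟩
    have hX1 : X *ᵥ (1 : β → ℚ) = 1 := by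
      funext v
      simpa [Matrix.mulVec, dotProduct] using hrow v
    have hX2 : (1 : α → ℚ) ᵥ* X = 1 := by
      funext w
      simpa [Matrix.vecMul, dotProduct] using hcol w
    have hpow : ∀ k : ℕ, (G.adjMatrix ℚ) ^ k * X = X * (H.adjMatrix ℚ) ^ k := by
      intro k
      induction k with
      | zero => simp
      | succ k ih =>
          rw [pow_succ', Matrix.mul_assoc, ih, ← Matrix.mul_assoc, hAX, Matrix.mul_assoc, ← pow_succ']
    have key : (1 : α → ℚ) ⬝ᵥ ((G.adjMatrix ℚ) ^ k *ᵥ 1)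
        = (1 : β → ℚ) ⬝ᵥ ((H.adjMatrix ℚ) ^ k *ᵥ 1) := by
      calc (1 : α → ℚ) ⬝ᵥ ((G.adjMatrix ℚ) ^ k *ᵥ 1)
          = (1 : α → ℚ) ⬝ᵥ ((G.adjMatrix ℚ) ^ k *ᵥ (X *ᵥ 1)) := by rw [hX1]
        _ = (1 : α → ℚ) ⬝ᵥ (((G.adjMatrix ℚ) ^ k * X) *ᵥ 1) := by rw [Matrix.mulVec_mulVec]
        _ = (1 : α → ℚ) ⬝ᵥ ((X * (H.adjMatrix ℚ) ^ k) *ᵥ 1) := by rw [hpow k]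
        _ = (1 : α → ℚ) ⬝ᵥ (X *ᵥ ((H.adjMatrix ℚ) ^ k *ᵥ 1)) := by rw [← Matrix.mulVec_mulVec]
        _ = ((1 : α → ℚ) ᵥ* X) ⬝ᵥ ((H.adjMatrix ℚ) ^ k *ᵥ 1) := by rw [Matrix.dotProduct_mulVec]
        _ = (1 : β → ℚ) ⬝ᵥ ((H.adjMatrix ℚ) ^ k *ᵥ 1) := by rw [hX2]
    have := (DGRaux.homCount_eq_dot G k).trans (key.trans (DGRaux.homCount_eq_dot H k).symm)
    exact_mod_cast this
end

section
/- Let n ≥ 1 and let F_1, …, F_m be a list of pairwise non-isomorphic finite simple graphs containing exactly one representative of each isomorphism class of simple graphs with at most n vertices. Then the m×m rational matrix HOM with entries HOM_{ij} := hom(F_i, F_j) is invertible. -/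
open Function

namespace HomMatrixAux

variable {α β γ : Type*}

/-- The number of injective homomorphisms from `F` to `G`. -/
noncomputable def injCount (F : SimpleGraph α) (G : SimpleGraph β) : ℕ :=
  Nat.card {e : F →g G // Injective e}

/-- The number of automorphisms of `F`. -/
noncomputable def autCount (F : SimpleGraph α) : ℕ := Nat.card (F ≃g F)

/-- `q` realizes `G` as the quotient of `F` by the kernel of `q`. -/
def IsQuot (F : SimpleGraph α) (G : SimpleGraph β) (q : α → β) : Prop :=
  Surjective q ∧ ∀ u v, G.Adj (q u) (q v) ↔ ∃ u' v', q u' = q u ∧ q v' = q v ∧ F.Adj u' v'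

/-- The number of quotient maps from `F` onto `G`. -/
noncomputable def quotCount (F : SimpleGraph α) (G : SimpleGraph β) : ℕ :=
  Nat.card {q : α → β // IsQuot F G q}

instance {F : SimpleGraph α} {G : SimpleGraph β} [Finite α] [Finite β] : Finite (F ≃g G) :=
  Finite.of_injective (fun f => (f : α ≃ β)) (fun f g h => by
    cases f; cases g; simp only [RelIso.mk.injEq]; exact h)

/-- The image graph of a homomorphism. -/
def rangeGraph {F : SimpleGraph α} {G : SimpleGraph β} (h : F →g G) :
    SimpleGraph (Set.range h) where
  Adj x y := ∃ u v, F.Adj u v ∧ h u = ↑x ∧ h v = ↑y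
  symm := by constructor; rintro x y ⟨u, v, huv, hu, hv⟩; exact ⟨v, u, huv.symm, hv, hu⟩
  loopless := by
    constructor
    rintro x ⟨u, v, huv, hu, hv⟩
    have := h.map_adj huv
    rw [hu, hv] at this
    exact G.loopless.irrefl x.1 this

variable {F : SimpleGraph α} {H : SimpleGraph γ} {G : SimpleGraph β}

/-- Composing a quotient map with an injective homomorphism. -/
def compHom (p : {q : α → γ // IsQuot F H q} × {e : H →g G // Injective e}) : F →g G where
  toFun := p.2.1 ∘ p.1.1
  map_rel' := fun {u v} huv => p.2.1.map_adj ((p.1.2.2 u v).mpr ⟨u, v, rfl, rfl, huv⟩)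

lemma quot_mul_inj [Finite α] [Finite β] [Finite γ] [Fintype (F →g G)] :
    quotCount F H * injCount H G
      = ∑ h : F →g G, Nat.card {p : {q : α → γ // IsQuot F H q} ×
          {e : H →g G // Injective e} // compHom p = h} := by
  classical
  have := Fintype.ofFinite ({q : α → γ // IsQuot F H q} × {e : H →g G // Injective e})
  rw [quotCount, injCount, ← Nat.card_prod,
    Nat.card_congr (Equiv.sigmaFiberEquiv (compHom (F := F) (H := H) (G := G))).symm,
    Nat.card_eq_fintype_card, Fintype.card_sigma]
  exact Finset.sum_congr rfl fun h _ => (Nat.card_eq_fintype_card).symm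

/-- From an isomorphism `rangeGraph h ≃g H`, produce a factorization of `h`. -/
noncomputable def toFact (h : F →g G) (σ : rangeGraph h ≃g H) :
    {p : {q : α → γ // IsQuot F H q} × {e : H →g G // Injective e} // compHom p = h} := by
  refine ⟨⟨⟨fun u => σ ⟨h u, Set.mem_range_self u⟩, ?_, ?_⟩,
    ⟨⟨fun a => ((σ.symm a : Set.range h) : β), ?_⟩, ?_⟩⟩, ?_⟩
  · -- surjective
    intro a
    obtain ⟨x, hx⟩ := σ.surjective a
    obtain ⟨u, hu⟩ := x.2
    refine ⟨u, ?_⟩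
    have hxx : (⟨h u, Set.mem_range_self u⟩ : Set.range h) = x := Subtype.ext hu
    show σ ⟨h u, Set.mem_range_self u⟩ = a
    rw [hxx, hx]
  · -- quotient property
    intro u v
    have key : ∀ a b : α, (σ ⟨h a, Set.mem_range_self a⟩ = σ ⟨h b, Set.mem_range_self b⟩)
        ↔ h a = h b := by
      intro a b
      exact ⟨fun hh => Subtype.ext_iff.mp (σ.injective hh),
        fun hh => congrArg σ (Subtype.ext hh)⟩
    rw [σ.map_adj_iff]
    constructor
    · rintro ⟨a, b, hab, ha, hb⟩
      exact ⟨a, b, (key a u).mpr ha, (key b v).mpr hb, hab⟩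
    · rintro ⟨u', v', hu', hv', huv⟩
      exact ⟨u', v', huv, (key u' u).mp hu', (key v' v).mp hv'⟩
  · -- e is a graph hom
    intro a b hab
    rw [← σ.symm.map_adj_iff] at hab
    obtain ⟨u, v, huv, hu, hv⟩ := hab
    have := h.map_adj huv
    rwa [hu, hv] at this
  · -- e injective
    intro a b hab
    have : σ.symm a = σ.symm b := Subtype.ext hab
    simpa using congrArg σ this
  · -- composition is h
    ext u
    show ((σ.symm (σ ⟨h u, Set.mem_range_self u⟩) : Set.range h) : β) = h u
    rw [σ.symm_apply_apply]

lemma toFact_bijective (h : F →g G) : Bijective (toFact (H := H) h) := by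
  constructor
  · intro σ σ' hσσ'
    have h1 : ∀ u : α, σ ⟨h u, Set.mem_range_self u⟩ = σ' ⟨h u, Set.mem_range_self u⟩ :=
      fun u => congrFun (congrArg (fun p => p.1.1) (Subtype.ext_iff.mp hσσ')) u
    apply RelIso.coe_fn_injective
    funext x
    obtain ⟨u, hu⟩ := x.2
    have hx : x = ⟨h u, Set.mem_range_self u⟩ := Subtype.ext hu.symm
    rw [hx]
    exact h1 u
  · rintro ⟨⟨⟨q, hsurj, hquot⟩, ⟨e, he⟩⟩, hcomp⟩
    have hfun : ∀ u, e (q u) = h u := fun u => DFunLike.congr_fun hcomp u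
    have key : ∀ a b, q a = q b ↔ h a = h b := by
      intro a b
      constructor
      · intro hh; rw [← hfun a, ← hfun b, hh]
      · intro hh; apply he; rw [hfun a, hfun b, hh]
    have hmem : ∀ a : γ, e a ∈ Set.range h := by
      intro a
      obtain ⟨u, hu⟩ := hsurj a
      exact ⟨u, by rw [← hfun u, hu]⟩
    refine ⟨⟨⟨fun x => q x.2.choose, fun a => ⟨e a, hmem a⟩, ?_, ?_⟩, ?_⟩, ?_⟩
    · intro x
      refine Subtype.ext ?_
      show e (q x.2.choose) = x.1
      rw [hfun]
      exact x.2.choose_spec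
    · intro a
      have hc : h (hmem a).choose = e a := (hmem a).choose_spec
      show q (hmem a).choose = a
      apply he
      rw [hfun]
      exact hc
    · intro x y
      show H.Adj (q x.2.choose) (q y.2.choose) ↔ (rangeGraph h).Adj x y
      rw [hquot]
      have hx : h x.2.choose = x.1 := x.2.choose_spec
      have hy : h y.2.choose = y.1 := y.2.choose_spec
      constructor
      · rintro ⟨u', v', hu', hv', huv⟩
        exact ⟨u', v', huv, by rw [(key u' _).mp hu', hx], by rw [(key v' _).mp hv', hy]⟩
      · rintro ⟨u, v, huv, hu, hv⟩
        exact ⟨u, v, (key u _).mpr (by rw [hu, hx]), (key v _).mpr (by rw [hv, hy]), huv⟩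
    · -- toFact σ = p
      apply Subtype.ext
      apply Prod.ext
      · apply Subtype.ext
        funext u
        show q (⟨h u, Set.mem_range_self u⟩ : Set.range h).2.choose = q u
        exact (key _ u).mpr (Set.mem_range_self u).choose_spec
      · apply Subtype.ext
        apply DFunLike.ext
        intro a
        rfl

/-- The number of factorizations of `h` through `H` equals the number of isomorphisms
`rangeGraph h ≃g H`. -/
lemma card_fact (h : F →g G) :
    Nat.card {p : {q : α → γ // IsQuot F H q} × {e : H →g G // Injective e} // compHom p = h}
      = Nat.card (rangeGraph h ≃g H) :=
  (Nat.card_eq_of_bijective _ (toFact_bijective h)).symm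

lemma card_iso_eq (A : SimpleGraph α) (B : SimpleGraph β) [hne : Nonempty (A ≃g B)] :
    Nat.card (A ≃g B) = Nat.card (B ≃g B) := by
  obtain ⟨φ₀⟩ := hne
  apply Nat.card_congr
  refine ⟨fun σ => φ₀.symm.trans σ, fun τ => φ₀.trans τ, ?_, ?_⟩
  · intro σ
    apply RelIso.coe_fn_injective
    funext x
    simp
  · intro τ
    apply RelIso.coe_fn_injective
    funext x
    simp

lemma quot_card_le {F : SimpleGraph α} {G : SimpleGraph β} [Finite α] {q : α → β}
    (hq : IsQuot F G q) : Nat.card β ≤ Nat.card α :=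
  Nat.card_le_card_of_surjective q hq.1

lemma quot_iso {F : SimpleGraph α} {G : SimpleGraph β} [Finite α]
    (hcard : Nat.card α = Nat.card β) {q : α → β} (hq : IsQuot F G q) :
    Nonempty (F ≃g G) := by
  have hbij : Bijective q := (Nat.bijective_iff_surjective_and_card q).mpr ⟨hq.1, hcard⟩
  refine ⟨⟨Equiv.ofBijective q hbij, ?_⟩⟩
  intro u v
  show G.Adj (q u) (q v) ↔ F.Adj u v
  rw [hq.2]
  constructor
  · rintro ⟨u', v', hu', hv', huv⟩
    rwa [hbij.1 hu', hbij.1 hv'] at huv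
  · intro huv
    exact ⟨u, v, rfl, rfl, huv⟩

lemma inj_iso {F : SimpleGraph α} {G : SimpleGraph β} [Finite α] [Finite β]
    (hcard : Nat.card α = Nat.card β) (hedge : Nat.card F.edgeSet = Nat.card G.edgeSet)
    {e : F →g G} (he : Injective e) : Nonempty (F ≃g G) := by
  have hbij : Bijective e := (Nat.bijective_iff_injective_and_card e).mpr ⟨he, hcard⟩
  have hedgebij : Bijective e.mapEdgeSet :=
    (Nat.bijective_iff_injective_and_card _).mpr
      ⟨SimpleGraph.Hom.mapEdgeSet.injective e he, hedge⟩
  refine ⟨⟨Equiv.ofBijective e hbij, ?_⟩⟩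
  intro u v
  show G.Adj (e u) (e v) ↔ F.Adj u v
  constructor
  · intro hadj
    obtain ⟨⟨s, hs⟩, hmap⟩ := hedgebij.2 ⟨s(e u, e v), hadj⟩
    induction s with
    | _ a b =>
      have : Sym2.map e s(a, b) = s(e u, e v) := Subtype.ext_iff.mp hmap
      rw [Sym2.map_pair_eq, Sym2.eq_iff] at this
      rcases this with ⟨ha, hb⟩ | ⟨ha, hb⟩
      · rwa [← he ha, ← he hb]
      · rw [← he ha, ← he hb]
        exact (F.mem_edgeSet.mp hs).symm
  · exact e.map_adj

lemma det_ne_zero_of_tri {m' : Type*} [Fintype m'] [DecidableEq m'] {ι : Type*}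
    [LinearOrder ι] (M : Matrix m' m' ℚ) (b : m' → ι)
    (h1 : M.BlockTriangular b) (h2 : ∀ i j, i ≠ j → b i = b j → M i j = 0)
    (h3 : ∀ i, M i i ≠ 0) : M.det ≠ 0 := by
  rw [h1.det]
  apply Finset.prod_ne_zero_iff.mpr
  intro a _
  have hblock : M.toSquareBlock b a
      = Matrix.diagonal (fun i : {i // b i = a} => M i.1 i.1) := by
    ext i j
    by_cases hij : i = j
    · subst hij
      simp [Matrix.toSquareBlock, Matrix.toSquareBlockProp, Matrix.diagonal]
    · have : i.1 ≠ j.1 := fun hh => hij (Subtype.ext hh)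
      rw [Matrix.diagonal_apply_ne _ hij]
      exact h2 i.1 j.1 this (i.2.trans j.2.symm)
  rw [hblock, Matrix.det_diagonal]
  exact Finset.prod_ne_zero_iff.mpr fun i _ => h3 i.1

lemma id_isQuot (F : SimpleGraph α) : IsQuot F F id := by
  refine ⟨surjective_id, fun u v => ?_⟩
  constructor
  · intro h
    exact ⟨u, v, rfl, rfl, h⟩
  · rintro ⟨u', v', hu, hv, huv⟩
    simp only [id] at hu hv
    rwa [hu, hv] at huv

end HomMatrixAux

open HomMatrixAux

/-- If `F₁, …, F_m` contains exactly one representative of each isomorphism class of simple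
graphs with at most `n` vertices (`n ≥ 1`), then the matrix `HOM` with entries
`HOM_{ij} = hom(F_i, F_j)` (over `ℚ`) is invertible. -/
theorem homMatrix_isUnit (n : ℕ) (hn : 1 ≤ n) (m : ℕ)
    (Fs : Fin m → Σ k : ℕ, SimpleGraph (Fin k))
    (hle : ∀ i, (Fs i).1 ≤ n)
    (hrep : ∀ k : ℕ, k ≤ n → ∀ F : SimpleGraph (Fin k), ∃! i, Nonempty (F ≃g (Fs i).2)) :
    IsUnit (Matrix.of fun i j : Fin m => (homCount (Fs i).2 (Fs j).2 : ℚ)) := by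
  classical
  -- uniqueness of representatives
  have uniq_idx : ∀ (i : Fin m) {k : Fin m}, Nonempty ((Fs i).2 ≃g (Fs k).2) → k = i := by
    intro i k hk
    obtain ⟨k₀, _, hu⟩ := hrep (Fs i).1 (hle i) (Fs i).2
    exact (hu k hk).trans (hu i ⟨RelIso.refl _⟩).symm
  -- uniqueness of representative for the range graph of any hom
  have uniq_range : ∀ (i j : Fin m) (h : (Fs i).2 →g (Fs j).2),
      ∃! k : Fin m, Nonempty (rangeGraph h ≃g (Fs k).2) := by
    intro i j h
    have : Fintype (Set.range ⇑h) := Fintype.ofFinite _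
    set c := Fintype.card (Set.range ⇑h) with hc
    have hcle : c ≤ n := by
      have h2 : Fintype.card (Set.range ⇑h) ≤ Fintype.card (Fin (Fs j).1) :=
        Fintype.card_le_of_injective _ Subtype.val_injective
      rw [Fintype.card_fin] at h2
      exact le_trans h2 (hle j)
    set e := Fintype.equivFin (Set.range ⇑h) with he
    set F' := (rangeGraph h).map e.toEmbedding with hF'
    have φ : rangeGraph h ≃g F' := SimpleGraph.Iso.map e (rangeGraph h)
    obtain ⟨k₀, hk₀, hu⟩ := hrep c hcle F'
    refine ⟨k₀, ⟨φ.trans hk₀.some⟩, ?_⟩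
    intro k hk
    exact hu k ⟨φ.symm.trans hk.some⟩
  -- the three matrices
  set P : Matrix (Fin m) (Fin m) ℚ :=
    Matrix.of fun i k => (quotCount (Fs i).2 (Fs k).2 : ℚ) with hP
  set D : Matrix (Fin m) (Fin m) ℚ :=
    Matrix.diagonal fun k => ((autCount (Fs k).2 : ℚ))⁻¹ with hD
  set I : Matrix (Fin m) (Fin m) ℚ :=
    Matrix.of fun k j => (injCount (Fs k).2 (Fs j).2 : ℚ) with hI
  have aut_ne : ∀ k : Fin m, (autCount (Fs k).2 : ℚ) ≠ 0 := by
    intro k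
    rw [Nat.cast_ne_zero]
    exact Nat.card_ne_zero.mpr ⟨⟨RelIso.refl _⟩, inferInstance⟩
  -- the factorization identity
  have main : Matrix.of (fun i j : Fin m => (homCount (Fs i).2 (Fs j).2 : ℚ)) = P * D * I := by
    ext i j
    rw [Matrix.mul_apply]
    simp only [Matrix.mul_diagonal, hD]
    have step1 : ∀ k : Fin m,
        P i k * (autCount (Fs k).2 : ℚ)⁻¹ * I k j
          = ∑ h : (Fs i).2 →g (Fs j).2,
              (Nat.card (rangeGraph h ≃g (Fs k).2) : ℚ) * (autCount (Fs k).2 : ℚ)⁻¹ := by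
      intro k
      have hq : P i k * I k j
          = ∑ h : (Fs i).2 →g (Fs j).2, (Nat.card (rangeGraph h ≃g (Fs k).2) : ℚ) := by
        have := quot_mul_inj (F := (Fs i).2) (H := (Fs k).2) (G := (Fs j).2)
        have hcast := congrArg (Nat.cast : ℕ → ℚ) this
        push_cast at hcast
        rw [hP, hI]
        simp only [Matrix.of_apply]
        rw [hcast]
        exact Finset.sum_congr rfl fun h _ => by rw [card_fact h]
      calc P i k * (autCount (Fs k).2 : ℚ)⁻¹ * I k j
          = P i k * I k j * (autCount (Fs k).2 : ℚ)⁻¹ := by ring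
        _ = (∑ h : (Fs i).2 →g (Fs j).2,
              (Nat.card (rangeGraph h ≃g (Fs k).2) : ℚ)) * (autCount (Fs k).2 : ℚ)⁻¹ := by
            rw [hq]
        _ = ∑ h : (Fs i).2 →g (Fs j).2,
              (Nat.card (rangeGraph h ≃g (Fs k).2) : ℚ) * (autCount (Fs k).2 : ℚ)⁻¹ :=
            Finset.sum_mul _ _ _
    calc (Matrix.of (fun i j : Fin m => (homCount (Fs i).2 (Fs j).2 : ℚ))) i j
        = ∑ h : (Fs i).2 →g (Fs j).2, (1 : ℚ) := by
          simp [homCount, Nat.card_eq_fintype_card]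
      _ = ∑ h : (Fs i).2 →g (Fs j).2, ∑ k : Fin m,
            (Nat.card (rangeGraph h ≃g (Fs k).2) : ℚ) * (autCount (Fs k).2 : ℚ)⁻¹ := by
          refine Finset.sum_congr rfl fun h _ => ?_
          obtain ⟨k₀, hk₀, hu⟩ := uniq_range i j h
          rw [Finset.sum_eq_single k₀]
          · haveI : Nonempty (rangeGraph h ≃g (Fs k₀).2) := hk₀
            rw [card_iso_eq]
            exact (mul_inv_cancel₀ (aut_ne k₀)).symm
          · intro k _ hkk
            have : IsEmpty (rangeGraph h ≃g (Fs k).2) := by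
              by_contra hcon
              rw [not_isEmpty_iff] at hcon
              exact hkk (hu k hcon)
            rw [Nat.card_of_isEmpty]
            simp
          · intro hcon
            exact absurd (Finset.mem_univ k₀) hcon
      _ = ∑ k : Fin m, ∑ h : (Fs i).2 →g (Fs j).2,
            (Nat.card (rangeGraph h ≃g (Fs k).2) : ℚ) * (autCount (Fs k).2 : ℚ)⁻¹ :=
          Finset.sum_comm
      _ = ∑ k : Fin m, P i k * (autCount (Fs k).2 : ℚ)⁻¹ * I k j := by
          exact Finset.sum_congr rfl fun k _ => (step1 k).symm
  rw [main]
  -- invertibility of the three factors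
  have hPunit : IsUnit P := by
    rw [Matrix.isUnit_iff_isUnit_det, isUnit_iff_ne_zero]
    refine det_ne_zero_of_tri P (fun i => OrderDual.toDual (Fs i).1) ?_ ?_ ?_
    · intro i k hik
      have hlt : (Fs i).1 < (Fs k).1 := hik
      simp only [hP, Matrix.of_apply, Nat.cast_eq_zero]
      by_contra hne
      obtain ⟨⟨q, hq⟩⟩ := (Nat.card_ne_zero.mp hne).1
      have := quot_card_le hq
      simp only [Nat.card_eq_fintype_card, Fintype.card_fin] at this
      omega
    · intro i k hik hbik
      have hcard : (Fs i).1 = (Fs k).1 := OrderDual.toDual.injective hbik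
      simp only [hP, Matrix.of_apply, Nat.cast_eq_zero]
      by_contra hne
      obtain ⟨⟨q, hq⟩⟩ := (Nat.card_ne_zero.mp hne).1
      have hiso := quot_iso (by simp [hcard]) hq
      exact hik (uniq_idx i hiso).symm
    · intro i
      simp only [hP, Matrix.of_apply, Nat.cast_ne_zero]
      exact Nat.card_ne_zero.mpr ⟨⟨id, id_isQuot _⟩, inferInstance⟩
  have hDunit : IsUnit D := by
    rw [Matrix.isUnit_iff_isUnit_det, isUnit_iff_ne_zero, hD, Matrix.det_diagonal]
    exact Finset.prod_ne_zero_iff.mpr fun k _ => inv_ne_zero (aut_ne k)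
  have hIunit : IsUnit I := by
    rw [Matrix.isUnit_iff_isUnit_det, isUnit_iff_ne_zero]
    refine det_ne_zero_of_tri I
      (fun k => toLex ((Fs k).1, Nat.card (Fs k).2.edgeSet)) ?_ ?_ ?_
    · intro k j hkj
      rw [Prod.Lex.lt_iff] at hkj
      simp only [hI, Matrix.of_apply, Nat.cast_eq_zero]
      by_contra hne
      obtain ⟨⟨e, he⟩⟩ := (Nat.card_ne_zero.mp hne).1
      have hcle : (Fs k).1 ≤ (Fs j).1 := by
        have := Nat.card_le_card_of_injective e he
        simpa using this
      rcases hkj with hlt | ⟨heq, hlt⟩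
      · simp only [ofLex_toLex] at hlt; omega
      · simp only [ofLex_toLex] at heq hlt
        have hedge := Nat.card_le_card_of_injective e.mapEdgeSet
          (SimpleGraph.Hom.mapEdgeSet.injective e he)
        omega
    · intro k j hkj hbkj
      have hpair : ((Fs k).1, Nat.card (Fs k).2.edgeSet)
          = ((Fs j).1, Nat.card (Fs j).2.edgeSet) := by
        exact congrArg ofLex hbkj
      have hcard : (Fs k).1 = (Fs j).1 := congrArg Prod.fst hpair
      have hedge : Nat.card (Fs k).2.edgeSet = Nat.card (Fs j).2.edgeSet :=
        congrArg Prod.snd hpair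
      simp only [hI, Matrix.of_apply, Nat.cast_eq_zero]
      by_contra hne
      obtain ⟨⟨e, he⟩⟩ := (Nat.card_ne_zero.mp hne).1
      have hiso := inj_iso (by simp [hcard]) hedge he
      exact hkj (uniq_idx k hiso).symm
    · intro k
      simp only [hI, Matrix.of_apply, Nat.cast_ne_zero]
      exact Nat.card_ne_zero.mpr ⟨⟨SimpleGraph.Hom.id, fun a b h => h⟩, inferInstance⟩
  exact (hPunit.mul hDunit).mul hIunit
end

section
/- Let A be an m×n matrix of nonnegative real numbers whose columns are pairwise distinct, and let p, q ∈ ℝ^n have nonnegative entries. If for every vector d = (d_1,…,d_m) of nonnegative integers it holds that Σ_{j=1}^n (Π_{i=1}^m A_{ij}^{d_i}) · p_j = Σ_{j=1}^n (Π_{i=1}^m A_{ij}^{d_i}) · q_j (with the convention 0^0 = 1), then p_j = q_j for all j. -/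
/-- Let `A` be an `m × n` matrix of nonnegative reals with pairwise distinct columns, and let
`p, q` be nonnegative vectors. If `Σ_j (Π_i A i j ^ d i) * p j = Σ_j (Π_i A i j ^ d i) * q j`
for every vector `d` of nonnegative integers (with the convention `0 ^ 0 = 1`), then `p = q`. -/
theorem eq_of_moment_sums_eq (m n : ℕ) (A : Matrix (Fin m) (Fin n) ℝ)
    (hA : ∀ i j, 0 ≤ A i j)
    (hcols : ∀ j j' : Fin n, j ≠ j' → ∃ i, A i j ≠ A i j')
    (p q : Fin n → ℝ) (hp : ∀ j, 0 ≤ p j) (hq : ∀ j, 0 ≤ q j)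
    (h : ∀ d : Fin m → ℕ,
      ∑ j, (∏ i, A i j ^ d i) * p j = ∑ j, (∏ i, A i j ^ d i) * q j) :
    ∀ j, p j = q j := by
  classical
  set r : Fin n → ℝ := fun j => p j - q j with hr
  set V : Submodule ℝ (Fin n → ℝ) :=
    Submodule.span ℝ {f | ∃ d : Fin m → ℕ, f = fun j => ∏ i, A i j ^ d i} with hV
  have hmono : ∀ d : Fin m → ℕ, (fun j => ∏ i, A i j ^ d i) ∈ V := fun d =>
    Submodule.subset_span ⟨d, rfl⟩
  have hker : ∀ f ∈ V, ∑ j, f j * r j = 0 := by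
    intro f hf
    induction hf using Submodule.span_induction with
    | mem f hf =>
      obtain ⟨d, rfl⟩ := hf
      simp only [hr, mul_sub, Finset.sum_sub_distrib]
      rw [h d]; ring
    | zero => simp
    | add f g _ _ hf hg => simp [add_mul, Finset.sum_add_distrib, hf, hg]
    | smul c f _ hf =>
      simp only [Pi.smul_apply, smul_eq_mul, mul_assoc, ← Finset.mul_sum, hf, mul_zero]
  have hmul : ∀ (i : Fin m), ∀ f ∈ V, (fun j => A i j * f j) ∈ V := by
    intro i f hf
    induction hf using Submodule.span_induction with
    | mem f hf =>
      obtain ⟨d, rfl⟩ := hf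
      refine Submodule.subset_span ⟨fun i' => d i' + (if i' = i then 1 else 0), ?_⟩
      funext j
      simp only [pow_add, Finset.prod_mul_distrib]
      have : (∏ i', A i' j ^ (if i' = i then 1 else 0)) = A i j := by
        rw [Finset.prod_eq_single i]
        · simp
        · intro b _ hb; simp [hb]
        · intro hc; exact absurd (Finset.mem_univ i) hc
      rw [this]; ring
    | zero =>
      have : (fun j => A i j * (0 : Fin n → ℝ) j) = (0 : Fin n → ℝ) := by
        funext j; simp
      rw [this]; exact V.zero_mem
    | add f g _ _ hf hg =>
      have : (fun j => A i j * (f + g) j) =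
          (fun j => A i j * f j) + (fun j => A i j * g j) := by
        funext j; simp [mul_add]
      rw [this]; exact V.add_mem hf hg
    | smul c f _ hf =>
      have : (fun j => A i j * (c • f) j) = c • (fun j => A i j * f j) := by
        funext j; simp [smul_eq_mul]; ring
      rw [this]; exact V.smul_mem c hf
  intro j0
  have key : r j0 = 0 := by
    set F : Fin n → (Fin n → ℝ) := fun j' =>
      if h : ∃ i, A i j' ≠ A i j0 then
        fun j => (A h.choose j - A h.choose j') / (A h.choose j0 - A h.choose j')
      else fun _ => 1 with hF
    have hprod : ∀ s : Finset (Fin n), (fun j => ∏ j' ∈ s, F j' j) ∈ V := by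
      intro s
      induction s using Finset.induction with
      | empty => simpa using hmono (fun _ => 0)
      | @insert a s ha ih =>
        have hins : (fun j => ∏ j' ∈ insert a s, F j' j) =
            fun j => F a j * ∏ j' ∈ s, F j' j := by
          funext j; rw [Finset.prod_insert ha]
        rw [hins]
        by_cases hex : ∃ i, A i a ≠ A i j0
        · have hsplit : (fun j => F a j * ∏ j' ∈ s, F j' j)
              = ((A hex.choose j0 - A hex.choose a)⁻¹ •
                  (fun j => A hex.choose j * ∏ j' ∈ s, F j' j))
                + ((-(A hex.choose a) / (A hex.choose j0 - A hex.choose a)) •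
                  (fun j => ∏ j' ∈ s, F j' j)) := by
            funext j
            simp only [hF, dif_pos hex, Pi.add_apply, Pi.smul_apply, smul_eq_mul]
            ring
          rw [hsplit]
          exact V.add_mem (V.smul_mem _ (hmul hex.choose _ ih)) (V.smul_mem _ ih)
        · have : (fun j => F a j * ∏ j' ∈ s, F j' j) = fun j => ∏ j' ∈ s, F j' j := by
            funext j; simp [hF, dif_neg hex]
          rw [this]; exact ih
    have hsum := hker _ (hprod (Finset.univ.erase j0))
    have hP0 : (∏ j' ∈ Finset.univ.erase j0, F j' j0) = 1 := by
      apply Finset.prod_eq_one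
      intro j' hj'
      have hne : j' ≠ j0 := Finset.ne_of_mem_erase hj'
      have hex : ∃ i, A i j' ≠ A i j0 := hcols j' j0 hne
      simp only [hF, dif_pos hex]
      exact div_self (sub_ne_zero.mpr (Ne.symm hex.choose_spec))
    have hPj : ∀ j, j ≠ j0 → (∏ j' ∈ Finset.univ.erase j0, F j' j) = 0 := by
      intro j hj
      apply Finset.prod_eq_zero (Finset.mem_erase.mpr ⟨hj, Finset.mem_univ j⟩)
      have hex : ∃ i, A i j ≠ A i j0 := hcols j j0 hj
      simp [hF, dif_pos hex]
    rw [Finset.sum_eq_single j0] at hsum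
    · rwa [hP0, one_mul] at hsum
    · intro j _ hj; rw [hPj j hj, zero_mul]
    · intro hc; exact absurd (Finset.mem_univ j0) hc
  have := key
  simpa [hr, sub_eq_zero] using this
end

section
/- Let G = (V, E_G) and H = (W, E_H) be finite directed graphs (finite vertex sets with binary edge relations). Then hom(F, G) = hom(F, H) for every finite directed acyclic graph F — i.e. every finite directed graph whose edge relation admits no directed cycle (no vertex a with a path of one or more edges from a back to a) — if and only if G and H are isomorphic (there is a bijection f : V → W with (u,u') ∈ E_G ⇔ (f(u), f(u')) ∈ E_H). -/
/-- The number of homomorphisms between directed graphs (vertex types with edge relations):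
maps sending edges to edges. -/
noncomputable def dihomCount {α β : Type*} (E : α → α → Prop) (E' : β → β → Prop) : ℕ :=
  Nat.card {h : α → β // ∀ a b, E a b → E' (h a) (h b)}

/-- A directed graph is acyclic if no vertex is related to itself by the transitive closure
of the edge relation. -/
def DiAcyclic {α : Type*} (E : α → α → Prop) : Prop :=
  ¬∃ a, Relation.TransGen E a a

namespace LovaszDagProof

open Function

/-- Homomorphism condition. -/
def HomC {σ X : Type*} (P : σ → σ → Prop) (EX : X → X → Prop) (h : σ → X) : Prop :=
  ∀ a b, P a b → EX (h a) (h b)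

/-- Injectivity on all level fibers below `t`. -/
def InjC {σ X : Type*} (ρ : σ → ℕ) (t : ℕ) (h : σ → X) : Prop :=
  ∀ i, i < t → Set.InjOn h {x | ρ x = i}

/-- Count of homomorphisms injective on levels below `t`. -/
noncomputable def NtC (σ : Type*) (ρ : σ → ℕ) (P : σ → σ → Prop)
    (X : Type*) (EX : X → X → Prop) (t : ℕ) : ℕ :=
  Nat.card {h : σ → X // HomC P EX h ∧ InjC ρ t h}

/-- Number of distinct values taken on the level-`t` fiber. -/
noncomputable def rk {σ X : Type*} (ρ : σ → ℕ) (t : ℕ) (h : σ → X) : ℕ :=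
  (h '' {x | ρ x = t}).ncard

/-- Vertex type after collapsing the level-`t` fiber to `Fin r`. -/
def QT (σ : Type*) (ρ : σ → ℕ) (t r : ℕ) : Type _ := {x : σ // ρ x ≠ t} ⊕ Fin r

/-- Level function on the collapsed type. -/
def Qρ {σ : Type*} (ρ : σ → ℕ) (t r : ℕ) : QT σ ρ t r → ℕ :=
  Sum.elim (fun x => ρ x.val) (fun _ => t)

/-- Collapsing map. -/
def qproj {σ : Type*} (ρ : σ → ℕ) (t r : ℕ) (q : {x : σ // ρ x = t} → Fin r) (x : σ) :
    QT σ ρ t r :=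
  if hx : ρ x = t then Sum.inr (q ⟨x, hx⟩) else Sum.inl ⟨x, hx⟩

/-- Pushed-forward pattern on the collapsed type. -/
def QP {σ : Type*} (ρ : σ → ℕ) (t r : ℕ) (P : σ → σ → Prop)
    (q : {x : σ // ρ x = t} → Fin r) : QT σ ρ t r → QT σ ρ t r → Prop :=
  fun u v => ∃ a b, P a b ∧ qproj ρ t r q a = u ∧ qproj ρ t r q b = v

section basic

variable {σ : Type*} {ρ : σ → ℕ} {t r : ℕ} {q : {x : σ // ρ x = t} → Fin r}

lemma qproj_mem {x : σ} (hx : ρ x = t) : qproj ρ t r q x = Sum.inr (q ⟨x, hx⟩) :=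
  dif_pos hx

lemma qproj_not_mem {x : σ} (hx : ρ x ≠ t) : qproj ρ t r q x = Sum.inl ⟨x, hx⟩ :=
  dif_neg hx

lemma Qρ_qproj (x : σ) : Qρ ρ t r (qproj ρ t r q x) = ρ x := by
  by_cases hx : ρ x = t
  · rw [qproj_mem hx]; simp [Qρ, hx]
  · rw [qproj_not_mem hx]; simp [Qρ]

lemma QP_graded {P : σ → σ → Prop} (hP : ∀ x y, P x y → ρ x < ρ y) :
    ∀ u v, QP ρ t r P q u v → Qρ ρ t r u < Qρ ρ t r v := by
  rintro u v ⟨a, b, hab, rfl, rfl⟩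
  rw [Qρ_qproj, Qρ_qproj]
  exact hP a b hab

/-- acyclicity from a strictly increasing potential -/
lemma diacyclic_of_lt {α : Type*} (F : α → α → Prop) (g : α → ℕ)
    (hg : ∀ a b, F a b → g a < g b) : DiAcyclic F := by
  rintro ⟨a, ha⟩
  have h1 : Relation.TransGen (· < · : ℕ → ℕ → Prop) (g a) (g a) :=
    Relation.TransGen.lift g hg _ _ ha
  rw [Relation.transGen_eq_self] at h1
  exact lt_irrefl _ h1

/-- The equiv between the level-`t` fiber of the collapsed type and `Fin r`. -/
def fibEquiv (σ : Type*) (ρ : σ → ℕ) (t r : ℕ) :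
    {y : QT σ ρ t r // Qρ ρ t r y = t} ≃ Fin r where
  toFun y := match y with
    | ⟨Sum.inl x, hy⟩ => absurd hy x.prop
    | ⟨Sum.inr j, _⟩ => j
  invFun j := ⟨Sum.inr j, rfl⟩
  left_inv y := by
    rcases y with ⟨x | j, hy⟩
    · exact absurd hy x.prop
    · rfl
  right_inv j := rfl

end basic

instance QT.fintype (σ : Type*) [Fintype σ] (ρ : σ → ℕ) (t r : ℕ) : Fintype (QT σ ρ t r) :=
  inferInstanceAs (Fintype ({x : σ // ρ x ≠ t} ⊕ Fin r))

/-- Splitting a subtype of a product as a sigma type. -/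
def prodSubtypeSigmaEquiv {α β : Type*} (S : α → Prop) (C : α → β → Prop) :
    {w : α × β // S w.1 ∧ C w.1 w.2} ≃ (a : {a // S a}) × {b // C a.val b} where
  toFun w := ⟨⟨w.val.1, w.prop.1⟩, ⟨w.val.2, w.prop.2⟩⟩
  invFun p := ⟨(p.1.val, p.2.val), p.1.prop, p.2.prop⟩
  left_inv w := rfl
  right_inv p := rfl

lemma natCard_sigma {ι : Type*} [Fintype ι] (κ : ι → Type*) [∀ i, Finite (κ i)] :
    Nat.card ((i : ι) × κ i) = ∑ i, Nat.card (κ i) := by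
  letI : ∀ i, Fintype (κ i) := fun i => Fintype.ofFinite (κ i)
  simp [Nat.card_eq_fintype_card, Fintype.card_sigma]


section core

/-- The number of injective enumerations of the image of the level-`t` fiber. -/
lemma fiber_count_factorial {σ X : Type*} [Finite σ] [Finite X] (ρ : σ → ℕ) (t r : ℕ)
    (h : σ → X) (hrk : rk ρ t h = r) :
    Nat.card {g : Fin r → X // Function.Injective g ∧ Set.range g = h '' {x | ρ x = t}}
      = r.factorial := by
  classical
  set s : Set X := h '' {x | ρ x = t} with hs
  have hcard : Nat.card ↥s = r := by
    rw [Nat.card_coe_set_eq]; exact hrk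
  have E : {g : Fin r → X // Function.Injective g ∧ Set.range g = s} ≃ (Fin r ≃ ↥s) := by
    refine
      { toFun := fun gg => Equiv.ofBijective
          (fun j => (⟨gg.val j, (Set.ext_iff.mp gg.prop.2 (gg.val j)).mp (Set.mem_range_self j)⟩ : ↥s)) ?_
        invFun := fun e => ⟨fun j => (e j).val, ?_, ?_⟩
        left_inv := fun gg => rfl
        right_inv := fun e => Equiv.ext fun j => Subtype.ext rfl }
    · constructor
      · intro j j' hjj
        exact gg.prop.1 (congrArg Subtype.val hjj)
      · rintro ⟨y, hy⟩
        rw [← gg.prop.2] at hy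
        obtain ⟨j, rfl⟩ := hy
        exact ⟨j, rfl⟩
    · intro j j' hjj
      exact e.injective (Subtype.ext hjj)
    · ext y
      constructor
      · rintro ⟨j, rfl⟩; exact (e j).prop
      · intro hy; exact ⟨e.symm ⟨y, hy⟩, by simp⟩
  rw [Nat.card_congr E]
  letI : Fintype ↥s := Fintype.ofFinite _
  rw [Nat.card_eq_fintype_card,
    Fintype.card_equiv (Fintype.equivOfCardEq
      (by rw [Fintype.card_fin, ← Nat.card_eq_fintype_card, hcard]))]
  simp

/-- Core double counting: collapsed level-injective homomorphism counts over all
surjections compute `r! ·` (number of homomorphisms of fiber-rank `r`). -/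
lemma core (σ : Type*) [Fintype σ] (ρ : σ → ℕ) (P : σ → σ → Prop) (t r : ℕ)
    (X : Type*) [Finite X] (EX : X → X → Prop) :
    Nat.card ((q : {q : {x : σ // ρ x = t} → Fin r // Function.Surjective q}) ×
        {h : QT σ ρ t r → X // HomC (QP ρ t r P q.val) EX h ∧ InjC (Qρ ρ t r) (t + 1) h})
      = r.factorial * Nat.card {h : σ → X // (HomC P EX h ∧ InjC ρ t h) ∧ rk ρ t h = r} := by
  classical
  set B := {x : σ // ρ x = t} with hB
  -- forward data check
  have key : ∀ (q : B → Fin r) (h' : QT σ ρ t r → X), Function.Surjective q →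
      HomC (QP ρ t r P q) EX h' → InjC (Qρ ρ t r) (t + 1) h' →
      ((HomC P EX (h' ∘ qproj ρ t r q) ∧ InjC ρ t (h' ∘ qproj ρ t r q)) ∧
          rk ρ t (h' ∘ qproj ρ t r q) = r) ∧
        (Function.Injective (fun j => h' (Sum.inr j)) ∧
          Set.range (fun j => h' (Sum.inr j)) = (h' ∘ qproj ρ t r q) '' {x | ρ x = t}) := by
    intro q h' hsurj hhom hinj
    have hginj : Function.Injective (fun j : Fin r => h' (Sum.inr j)) := by
      intro j j' hjj
      have h1 := hinj t (Nat.lt_succ_self t)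
        (show (Sum.inr j : QT σ ρ t r) ∈ {y | Qρ ρ t r y = t} from rfl)
        (show (Sum.inr j' : QT σ ρ t r) ∈ {y | Qρ ρ t r y = t} from rfl) hjj
      exact Sum.inr.inj h1
    have hrange : Set.range (fun j : Fin r => h' (Sum.inr j))
        = (h' ∘ qproj ρ t r q) '' {x | ρ x = t} := by
      ext y
      constructor
      · rintro ⟨j, rfl⟩
        obtain ⟨x, rfl⟩ := hsurj j
        exact ⟨x.val, x.prop, by simp [Function.comp_apply, qproj_mem x.prop]⟩
      · rintro ⟨x, hx, rfl⟩
        exact ⟨q ⟨x, hx⟩, by simp [Function.comp_apply, qproj_mem hx]⟩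
    refine ⟨⟨⟨?_, ?_⟩, ?_⟩, hginj, hrange⟩
    · intro a b hab
      exact hhom _ _ ⟨a, b, hab, rfl, rfl⟩
    · intro i hi x hx y hy hxy
      simp only [Set.mem_setOf_eq] at hx hy
      have hxt : ρ x ≠ t := by omega
      have hyt : ρ y ≠ t := by omega
      have e1 : qproj ρ t r q x = Sum.inl ⟨x, hxt⟩ := qproj_not_mem hxt
      have e2 : qproj ρ t r q y = Sum.inl ⟨y, hyt⟩ := qproj_not_mem hyt
      have h2 : (Sum.inl ⟨x, hxt⟩ : QT σ ρ t r) = Sum.inl ⟨y, hyt⟩ := by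
        apply hinj i (by omega)
          (show Qρ ρ t r (Sum.inl ⟨x, hxt⟩) = i from hx)
          (show Qρ ρ t r (Sum.inl ⟨y, hyt⟩) = i from hy)
        show h' (Sum.inl ⟨x, hxt⟩) = h' (Sum.inl ⟨y, hyt⟩)
        rw [← e1, ← e2]
        exact hxy
      exact congrArg Subtype.val (Sum.inl.inj h2)
    · show ((h' ∘ qproj ρ t r q) '' {x | ρ x = t}).ncard = r
      rw [← hrange, ← Set.image_univ, Set.ncard_image_of_injOn hginj.injOn,
        Set.ncard_univ, Nat.card_eq_fintype_card, Fintype.card_fin]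
  -- the bijection
  let TOT := {w : (B → Fin r) × (QT σ ρ t r → X) //
      Function.Surjective w.1 ∧ (HomC (QP ρ t r P w.1) EX w.2 ∧ InjC (Qρ ρ t r) (t + 1) w.2)}
  let RHSP := {w : (σ → X) × (Fin r → X) //
      ((HomC P EX w.1 ∧ InjC ρ t w.1) ∧ rk ρ t w.1 = r) ∧
      (Function.Injective w.2 ∧ Set.range w.2 = w.1 '' {x | ρ x = t})}
  let Φ : TOT → RHSP := fun w =>
    ⟨(w.val.2 ∘ qproj ρ t r w.val.1, fun j => w.val.2 (Sum.inr j)),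
      key w.val.1 w.val.2 w.prop.1 w.prop.2.1 w.prop.2.2⟩
  have hinjΦ : Function.Injective Φ := by
    rintro ⟨⟨q1, h1⟩, hs1, hh1, hi1⟩ ⟨⟨q2, h2⟩, hs2, hh2, hi2⟩ heq
    have hfst : h1 ∘ qproj ρ t r q1 = h2 ∘ qproj ρ t r q2 :=
      congrArg (fun z => z.val.1) heq
    have hsnd : (fun j => h1 (Sum.inr j)) = (fun j => h2 (Sum.inr j)) :=
      congrArg (fun z => z.val.2) heq
    have hg1inj : Function.Injective (fun j : Fin r => h1 (Sum.inr j)) :=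
      (key q1 h1 hs1 hh1 hi1).2.1
    have hq12 : q1 = q2 := by
      funext x
      apply hg1inj
      show h1 (Sum.inr (q1 x)) = h1 (Sum.inr (q2 x))
      have e1 : h1 (Sum.inr (q1 x)) = (h1 ∘ qproj ρ t r q1) x.val := by
        rw [Function.comp_apply, qproj_mem x.prop]
      have e2 : h2 (Sum.inr (q2 x)) = (h2 ∘ qproj ρ t r q2) x.val := by
        rw [Function.comp_apply, qproj_mem x.prop]
      rw [e1, hfst, ← e2]
      exact (congrFun hsnd (q2 x)).symm
    subst hq12
    have hh12 : h1 = h2 := by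
      funext u
      rcases u with x | j
      · have e1 : qproj ρ t r q1 x.val = Sum.inl x := qproj_not_mem x.prop
        calc h1 (Sum.inl x) = (h1 ∘ qproj ρ t r q1) x.val := by
              rw [Function.comp_apply, e1]
          _ = (h2 ∘ qproj ρ t r q1) x.val := by rw [hfst]
          _ = h2 (Sum.inl x) := by rw [Function.comp_apply, e1]
      · exact congrFun hsnd j
    subst hh12
    rfl
  have hsurjΦ : Function.Surjective Φ := by
    rintro ⟨⟨h, g⟩, ⟨⟨hhom, hinj⟩, hrk⟩, hginj, hgrange⟩
    have hmem : ∀ x : B, h x.val ∈ Set.range g := by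
      intro x; rw [hgrange]; exact ⟨x.val, x.prop, rfl⟩
    let e := Equiv.ofInjective g hginj
    let q : B → Fin r := fun x => e.symm ⟨h x.val, hmem x⟩
    have hq : ∀ x : B, g (q x) = h x.val := fun x =>
      Equiv.apply_ofInjective_symm hginj _
    let h' : QT σ ρ t r → X := Sum.elim (fun x => h x.val) g
    have hkey : ∀ x : σ, h' (qproj ρ t r q x) = h x := by
      intro x
      by_cases hx : ρ x = t
      · rw [qproj_mem hx]; exact hq ⟨x, hx⟩
      · rw [qproj_not_mem hx]; rfl
    have hqsurj : Function.Surjective q := by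
      intro j
      have hj : g j ∈ h '' {x | ρ x = t} := by rw [← hgrange]; exact ⟨j, rfl⟩
      obtain ⟨x, hx, hgx⟩ := hj
      refine ⟨⟨x, hx⟩, ?_⟩
      have h3 : (⟨h x, hmem ⟨x, hx⟩⟩ : ↥(Set.range g)) = e j := by
        rw [Equiv.ofInjective_apply]
        exact Subtype.ext hgx
      show e.symm _ = j
      rw [h3, Equiv.symm_apply_apply]
    refine ⟨⟨(q, h'), hqsurj, ?_, ?_⟩, ?_⟩
    · rintro u v ⟨a, b, hab, rfl, rfl⟩
      show EX (h' (qproj ρ t r q a)) (h' (qproj ρ t r q b))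
      rw [hkey a, hkey b]
      exact hhom a b hab
    · intro i hi u hu v hv huv
      simp only [Set.mem_setOf_eq] at hu hv
      rcases u with x | j <;> rcases v with y | j'
      · have hit : i ≠ t := fun hh => x.prop (hu.trans hh)
        have hilt : i < t := by omega
        have hxy := hinj i hilt (show ρ x.val = i from hu) (show ρ y.val = i from hv)
          (show h x.val = h y.val from huv)
        exact congrArg Sum.inl (Subtype.ext hxy)
      · exact absurd ((show ρ x.val = i from hu).trans (show t = i from hv).symm) x.prop
      · exact absurd ((show ρ y.val = i from hv).trans (show t = i from hu).symm) y.prop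
      · exact congrArg Sum.inr (hginj huv)
    · apply Subtype.ext
      apply Prod.ext
      · exact funext hkey
      · rfl
  -- cardinal bookkeeping
  letI : Fintype {q : B → Fin r // Function.Surjective q} := Fintype.ofFinite _
  letI : Fintype {h : σ → X // (HomC P EX h ∧ InjC ρ t h) ∧ rk ρ t h = r} :=
    Fintype.ofFinite _
  calc Nat.card ((q : {q : B → Fin r // Function.Surjective q}) ×
        {h : QT σ ρ t r → X // HomC (QP ρ t r P q.val) EX h ∧ InjC (Qρ ρ t r) (t + 1) h})
      = Nat.card TOT := Nat.card_congr
        ((prodSubtypeSigmaEquiv (fun q : B → Fin r => Function.Surjective q)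
          (fun q h => HomC (QP ρ t r P q) EX h ∧ InjC (Qρ ρ t r) (t + 1) h)).symm)
    _ = Nat.card RHSP := Nat.card_congr (Equiv.ofBijective Φ ⟨hinjΦ, hsurjΦ⟩)
    _ = Nat.card ((hh : {h : σ → X // (HomC P EX h ∧ InjC ρ t h) ∧ rk ρ t h = r}) ×
          {g : Fin r → X // Function.Injective g ∧ Set.range g = hh.val '' {x | ρ x = t}}) :=
        Nat.card_congr (prodSubtypeSigmaEquiv
          (fun h : σ → X => (HomC P EX h ∧ InjC ρ t h) ∧ rk ρ t h = r)
          (fun h g => Function.Injective g ∧ Set.range g = h '' {x | ρ x = t}))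
    _ = ∑ hh : {h : σ → X // (HomC P EX h ∧ InjC ρ t h) ∧ rk ρ t h = r},
          Nat.card {g : Fin r → X // Function.Injective g ∧
            Set.range g = hh.val '' {x | ρ x = t}} := natCard_sigma _
    _ = ∑ _hh : {h : σ → X // (HomC P EX h ∧ InjC ρ t h) ∧ rk ρ t h = r},
          r.factorial := by
        refine Finset.sum_congr rfl fun hh _ => ?_
        exact fiber_count_factorial ρ t r hh.val hh.prop.2
    _ = r.factorial * Nat.card {h : σ → X // (HomC P EX h ∧ InjC ρ t h) ∧ rk ρ t h = r} := by
        rw [Finset.sum_const, Finset.card_univ, smul_eq_mul, Nat.card_eq_fintype_card]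
        exact Nat.mul_comm _ _

end core


section induction

lemma QT_fiber_card (σ : Type*) [Fintype σ] (ρ : σ → ℕ) (t r : ℕ) :
    Nat.card {y : QT σ ρ t r // Qρ ρ t r y = t} = r := by
  rw [Nat.card_congr (fibEquiv σ ρ t r), Nat.card_eq_fintype_card, Fintype.card_fin]

lemma NtC_zero_eq (σ : Type) [Fintype σ] (ρ : σ → ℕ) (P : σ → σ → Prop)
    (X : Type*) (EX : X → X → Prop) :
    NtC σ ρ P X EX 0 = dihomCount
      (fun a b : Fin (Fintype.card σ) =>
        P ((Fintype.equivFin σ).symm a) ((Fintype.equivFin σ).symm b)) EX := by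
  unfold NtC dihomCount
  refine Nat.card_congr
    (Equiv.subtypeEquiv (Equiv.arrowCongr (Fintype.equivFin σ) (Equiv.refl X)) fun h => ?_)
  constructor
  · rintro ⟨hh, -⟩ a b hab
    simpa using hh _ _ hab
  · intro hh
    refine ⟨fun a b hab => ?_, fun i hi => absurd hi (Nat.not_lt_zero i)⟩
    have := hh (Fintype.equivFin σ a) (Fintype.equivFin σ b) (by simpa using hab)
    simpa using this

lemma top_eq {σ : Type*} [Finite σ] (ρ : σ → ℕ) (P : σ → σ → Prop) (t : ℕ)
    (X : Type*) (EX : X → X → Prop) (n : ℕ) (hn : Nat.card {x : σ // ρ x = t} = n) :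
    NtC σ ρ P X EX (t + 1)
      = Nat.card {h : σ → X // (HomC P EX h ∧ InjC ρ t h) ∧ rk ρ t h = n} := by
  have hfib : ({x : σ | ρ x = t}).ncard = n := by
    rw [← Nat.card_coe_set_eq]; exact hn
  apply Nat.card_congr
  apply Equiv.subtypeEquiv (Equiv.refl _)
  intro h
  simp only [Equiv.refl_apply]
  constructor
  · rintro ⟨hhom, hinj⟩
    refine ⟨⟨hhom, fun i hi => hinj i (by omega)⟩, ?_⟩
    show (h '' {x | ρ x = t}).ncard = n
    rw [Set.ncard_image_of_injOn (hinj t (by omega)), hfib]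
  · rintro ⟨⟨hhom, hinj⟩, hrk⟩
    refine ⟨hhom, fun i hi => ?_⟩
    rcases Nat.lt_succ_iff_lt_or_eq.mp hi with hlt | heq
    · exact hinj i hlt
    · subst heq
      refine Set.injOn_of_ncard_image_eq ?_ (Set.toFinite _)
      rw [hfib]
      exact hrk

lemma part_eq {σ : Type*} [Finite σ] (ρ : σ → ℕ) (P : σ → σ → Prop) (t : ℕ)
    (X : Type*) [Finite X] (EX : X → X → Prop) (n : ℕ)
    (hn : Nat.card {x : σ // ρ x = t} = n) :
    NtC σ ρ P X EX t = ∑ s ∈ Finset.range (n + 1),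
      Nat.card {h : σ → X // (HomC P EX h ∧ InjC ρ t h) ∧ rk ρ t h = s} := by
  classical
  have hfib : ({x : σ | ρ x = t}).ncard = n := by
    rw [← Nat.card_coe_set_eq]; exact hn
  have hbound : ∀ h : σ → X, rk ρ t h < n + 1 := by
    intro h
    have h1 : rk ρ t h ≤ ({x : σ | ρ x = t}).ncard := Set.ncard_image_le (Set.toFinite _)
    omega
  letI : ∀ s : ℕ, Fintype {h : σ → X // (HomC P EX h ∧ InjC ρ t h) ∧ rk ρ t h = s} :=
    fun s => Fintype.ofFinite _
  have E : {h : σ → X // HomC P EX h ∧ InjC ρ t h} ≃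
      (s : Fin (n + 1)) × {h : σ → X // (HomC P EX h ∧ InjC ρ t h) ∧ rk ρ t h = s.val} := by
    refine (Equiv.sigmaFiberEquiv (fun hh : {h : σ → X // HomC P EX h ∧ InjC ρ t h} =>
      (⟨rk ρ t hh.val, hbound hh.val⟩ : Fin (n + 1)))).symm.trans
      (Equiv.sigmaCongrRight fun s => ?_)
    refine (Equiv.subtypeEquiv (Equiv.refl _) fun hh => ?_).trans
      (Equiv.subtypeSubtypeEquivSubtypeInter _ _)
    simp only [Equiv.refl_apply, Fin.ext_iff]
  unfold NtC
  rw [Nat.card_congr E, natCard_sigma,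
    Fin.sum_univ_eq_sum_range (fun s =>
      Nat.card {h : σ → X // (HomC P EX h ∧ InjC ρ t h) ∧ rk ρ t h = s})]

/-- The main transfer: counts of level-injective homomorphisms from graded patterns
agree for the two targets. -/
lemma main_transfer {V W : Type*} [Fintype V] [Fintype W] {EG : V → V → Prop}
    {EH : W → W → Prop}
    (hyp : ∀ (n : ℕ) (F : Fin n → Fin n → Prop), DiAcyclic F →
      dihomCount F EG = dihomCount F EH) :
    ∀ (t : ℕ) (σ : Type) (inst : Fintype σ) (ρ : σ → ℕ) (P : σ → σ → Prop),
      (∀ x y, P x y → ρ x < ρ y) → NtC σ ρ P V EG t = NtC σ ρ P W EH t := by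
  intro t
  induction t with
  | zero =>
    intro σ inst ρ P hP
    letI := inst
    rw [NtC_zero_eq, NtC_zero_eq]
    exact hyp _ _ (diacyclic_of_lt _ (fun a => ρ ((Fintype.equivFin σ).symm a))
      (fun a b hab => hP _ _ hab))
  | succ t iht =>
    suffices H : ∀ (n : ℕ) (σ : Type) (inst : Fintype σ) (ρ : σ → ℕ) (P : σ → σ → Prop),
        (∀ x y, P x y → ρ x < ρ y) → Nat.card {x : σ // ρ x = t} = n →
        NtC σ ρ P V EG (t + 1) = NtC σ ρ P W EH (t + 1) by
      intro σ inst ρ P hP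
      exact H _ σ inst ρ P hP rfl
    intro n
    induction n using Nat.strong_induction_on with
    | _ n IH =>
      intro σ inst ρ P hP hn
      letI := inst
      classical
      -- lower rank counts agree
      have hlow : ∀ s, s < n →
          Nat.card {h : σ → V // (HomC P EG h ∧ InjC ρ t h) ∧ rk ρ t h = s}
            = Nat.card {h : σ → W // (HomC P EH h ∧ InjC ρ t h) ∧ rk ρ t h = s} := by
        intro s hs
        have hq : ∀ q : {q : {x : σ // ρ x = t} → Fin s // Function.Surjective q},
            NtC (QT σ ρ t s) (Qρ ρ t s) (QP ρ t s P q.val) V EG (t + 1)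
              = NtC (QT σ ρ t s) (Qρ ρ t s) (QP ρ t s P q.val) W EH (t + 1) := by
          intro q
          exact IH s hs (QT σ ρ t s) inferInstance (Qρ ρ t s) (QP ρ t s P q.val)
            (QP_graded hP) (QT_fiber_card σ ρ t s)
        have hsig :
            Nat.card ((q : {q : {x : σ // ρ x = t} → Fin s // Function.Surjective q}) ×
              {h : QT σ ρ t s → V //
                HomC (QP ρ t s P q.val) EG h ∧ InjC (Qρ ρ t s) (t + 1) h})
            = Nat.card ((q : {q : {x : σ // ρ x = t} → Fin s // Function.Surjective q}) ×
              {h : QT σ ρ t s → W //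
                HomC (QP ρ t s P q.val) EH h ∧ InjC (Qρ ρ t s) (t + 1) h}) := by
          letI : Fintype {q : {x : σ // ρ x = t} → Fin s // Function.Surjective q} :=
            Fintype.ofFinite _
          rw [natCard_sigma, natCard_sigma]
          exact Finset.sum_congr rfl fun q _ => hq q
        have hG := core σ ρ P t s V EG
        have hH := core σ ρ P t s W EH
        exact Nat.eq_of_mul_eq_mul_left (Nat.factorial_pos s)
          (hG.symm.trans (hsig.trans hH))
      -- totals agree
      have htot := iht σ inst ρ P hP
      rw [part_eq ρ P t V EG n hn, part_eq ρ P t W EH n hn,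
        Finset.sum_range_succ, Finset.sum_range_succ] at htot
      have hlows : ∑ s ∈ Finset.range n,
            Nat.card {h : σ → V // (HomC P EG h ∧ InjC ρ t h) ∧ rk ρ t h = s}
          = ∑ s ∈ Finset.range n,
            Nat.card {h : σ → W // (HomC P EH h ∧ InjC ρ t h) ∧ rk ρ t h = s} :=
        Finset.sum_congr rfl fun s hs => hlow s (Finset.mem_range.mp hs)
      rw [hlows] at htot
      have htop := Nat.add_left_cancel htot
      rw [top_eq ρ P t V EG n hn, top_eq ρ P t W EH n hn]
      exact htop

end induction

section finale

lemma dihom_point (X : Type*) [Fintype X] (EX : X → X → Prop) :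
    dihomCount (fun _ _ : Fin 1 => False) EX = Fintype.card X := by
  unfold dihomCount
  rw [Nat.card_congr ((Equiv.subtypeUnivEquiv (fun h => fun a b hf => hf.elim)).trans
    (Equiv.funUnique (Fin 1) X)), Nat.card_eq_fintype_card]

lemma dihom_edge (X : Type*) [Fintype X] (EX : X → X → Prop) :
    dihomCount (fun a b : Fin 2 => a = 0 ∧ b = 1) EX
      = Nat.card {p : X × X // EX p.1 p.2} := by
  unfold dihomCount
  apply Nat.card_congr
  have h10 : (1 : Fin 2) ≠ 0 := by decide
  refine
    { toFun := fun h => ⟨(h.val 0, h.val 1), h.prop 0 1 ⟨rfl, rfl⟩⟩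
      invFun := fun p => ⟨fun i => if i = 0 then p.val.1 else p.val.2, ?_⟩
      left_inv := fun h => ?_
      right_inv := fun p => ?_ }
  · rintro a b ⟨rfl, rfl⟩
    simpa [h10] using p.prop
  · apply Subtype.ext
    funext i
    fin_cases i <;> simp [h10]
  · apply Subtype.ext
    simp [h10]

end finale

end LovaszDagProof


/-- **Lovász (1971).** Two finite directed graphs `G = (V, E_G)` and `H = (W, E_H)` admit the
same number of homomorphisms from every finite directed acyclic graph if and only if they are
isomorphic. -/
theorem dihomCount_dag_eq_iff_iso {V W : Type*} [Fintype V] [Fintype W]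
    (EG : V → V → Prop) (EH : W → W → Prop) :
    (∀ (n : ℕ) (F : Fin n → Fin n → Prop), DiAcyclic F →
        dihomCount F EG = dihomCount F EH) ↔
      ∃ f : V ≃ W, ∀ u u' : V, EG u u' ↔ EH (f u) (f u') := by
  constructor
  · -- hard direction
    intro hyp
    classical
    -- equal vertex counts
    have hcV : Fintype.card V = Fintype.card W := by
      have h1 := hyp 1 (fun _ _ => False)
        (LovaszDagProof.diacyclic_of_lt _ (fun _ => 0) (fun a b h => h.elim))
      rwa [LovaszDagProof.dihom_point, LovaszDagProof.dihom_point] at h1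
    -- equal edge counts
    have hedge : Nat.card {p : V × V // EG p.1 p.2} = Nat.card {p : W × W // EH p.1 p.2} := by
      have h2 := hyp 2 (fun a b : Fin 2 => a = 0 ∧ b = 1)
        (LovaszDagProof.diacyclic_of_lt _ Fin.val (by rintro a b ⟨rfl, rfl⟩; decide))
      rwa [LovaszDagProof.dihom_edge, LovaszDagProof.dihom_edge] at h2
    -- the layered pattern
    set nV := Fintype.card V with hnV
    set eV := Fintype.equivFin V with heV
    set M := Fintype.card (V ↪ W) + 1 with hM
    set σ0 := (Fin M × Fin nV : Type) with hσ0
    set ρ0 : σ0 → ℕ := fun p => p.1.val with hρ0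
    set P0 : σ0 → σ0 → Prop :=
      fun p p' => p.1.val < p'.1.val ∧ EG (eV.symm p.2) (eV.symm p'.2) with hP0
    have hgrad : ∀ x y, P0 x y → ρ0 x < ρ0 y := fun x y h => h.1
    have hmain := LovaszDagProof.main_transfer hyp M σ0 inferInstance ρ0 P0 hgrad
    -- G-side witness
    have hGne : Nonempty {h : σ0 → V //
        LovaszDagProof.HomC P0 EG h ∧ LovaszDagProof.InjC ρ0 M h} := by
      refine ⟨⟨fun p => eV.symm p.2, ?_, ?_⟩⟩
      · rintro a b ⟨h1, h2⟩
        exact h2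
      · intro i hi x hx y hy hxy
        have h2 : x.2 = y.2 := eV.symm.injective hxy
        have h1 : x.1 = y.1 := Fin.ext ((show x.1.val = i from hx).trans
          (show y.1.val = i from hy).symm)
        exact Prod.ext h1 h2
    have hGpos : 0 < LovaszDagProof.NtC σ0 ρ0 P0 V EG M := by
      unfold LovaszDagProof.NtC
      exact Nat.card_pos
    have hHpos : 0 < LovaszDagProof.NtC σ0 ρ0 P0 W EH M := hmain ▸ hGpos
    have hHne : Nonempty {h : σ0 → W //
        LovaszDagProof.HomC P0 EH h ∧ LovaszDagProof.InjC ρ0 M h} := by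
      unfold LovaszDagProof.NtC at hHpos
      exact (Nat.card_pos_iff.mp hHpos).1
    obtain ⟨h, hhom, hinj⟩ := hHne
    -- the sequence of embeddings
    have hembinj : ∀ i : Fin M, Function.Injective (fun u => h (i, eV u)) := by
      intro i u u' huu
      have hmem1 : ρ0 (i, eV u) = i.val := rfl
      have hmem2 : ρ0 (i, eV u') = i.val := rfl
      have := hinj i.val i.isLt hmem1 hmem2 huu
      exact eV.injective (congrArg Prod.snd this)
    set F : Fin M → (V ↪ W) := fun i => ⟨fun u => h (i, eV u), hembinj i⟩ with hF
    obtain ⟨i0, j0, hne, hFeq⟩ := Fintype.exists_ne_map_eq_of_card_lt F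
      (by rw [Fintype.card_fin]; omega)
    obtain ⟨i, j, hij, hFij⟩ : ∃ i j : Fin M, i < j ∧ F i = F j := by
      rcases hne.lt_or_gt with hlt | hlt
      · exact ⟨i0, j0, hlt, hFeq⟩
      · exact ⟨j0, i0, hlt, hFeq.symm⟩
    set f : V → W := fun u => h (i, eV u) with hf
    have hfinj : Function.Injective f := hembinj i
    have hfhom : ∀ u v, EG u v → EH (f u) (f v) := by
      intro u v huv
      have hP : P0 (i, eV u) (j, eV v) := ⟨hij, by simpa using huv⟩
      have hEH := hhom _ _ hP
      have hj : h (j, eV v) = f v := by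
        have := congrFun (congrArg (fun (e : V ↪ W) => (e : V → W)) hFij) v
        exact this.symm
      rwa [hj] at hEH
    -- bijectivity
    have hbij : Function.Bijective f :=
      (Fintype.bijective_iff_injective_and_card f).2 ⟨hfinj, hcV⟩
    -- edge reflection by counting
    have hrefl : ∀ u u', EH (f u) (f u') → EG u u' := by
      intro u u' hEH
      set φ : {p : V × V // EG p.1 p.2} → {p : W × W // EH p.1 p.2} :=
        fun p => ⟨(f p.val.1, f p.val.2), hfhom _ _ p.prop⟩ with hφ
      have hφinj : Function.Injective φ := by
        rintro ⟨⟨a, b⟩, hab⟩ ⟨⟨c, d⟩, hcd⟩ hpq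
        have h1 := congrArg (fun z => z.val.1) hpq
        have h2 := congrArg (fun z => z.val.2) hpq
        exact Subtype.ext (Prod.ext (hfinj h1) (hfinj h2))
      letI : Fintype {p : V × V // EG p.1 p.2} := Fintype.ofFinite _
      letI : Fintype {p : W × W // EH p.1 p.2} := Fintype.ofFinite _
      have hc : Fintype.card {p : V × V // EG p.1 p.2}
          = Fintype.card {p : W × W // EH p.1 p.2} := by
        rw [← Nat.card_eq_fintype_card, ← Nat.card_eq_fintype_card]
        exact hedge
      have hφsurj : Function.Surjective φ :=
        ((Fintype.bijective_iff_injective_and_card φ).2 ⟨hφinj, hc⟩).2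
      obtain ⟨⟨⟨a, b⟩, hab⟩, hp⟩ := hφsurj ⟨(f u, f u'), hEH⟩
      have h1 : f a = f u := congrArg (fun z => z.val.1) hp
      have h2 : f b = f u' := congrArg (fun z => z.val.2) hp
      have ha := hfinj h1
      have hb := hfinj h2
      rwa [ha, hb] at hab
    exact ⟨Equiv.ofBijective f hbij, fun u u' =>
      ⟨fun hg => hfhom u u' hg, fun hh => hrefl u u' hh⟩⟩
  · -- easy direction
    rintro ⟨f, hf⟩ n F hF
    unfold dihomCount
    refine Nat.card_congr
      (Equiv.subtypeEquiv (Equiv.arrowCongr (Equiv.refl (Fin n)) f) fun h => ?_)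
    constructor
    · intro hh a b hab
      simpa using (hf (h a) (h b)).mp (hh a b hab)
    · intro hh a b hab
      exact (hf (h a) (h b)).mpr (by simpa using hh a b hab)
end
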